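/- arXiv:2304.15003 — 4 statements merged into one kernel-verified Lean document; each statement's English description precedes it below -/
import Mathlib

section
/- For every integer ℓ ≥ 2 and r ≥ 4, and every function p : ℕ → (0,1] satisfying p(n)·n^r → ∞ and p(n)·n^{(r−1)−1/(2ℓ−1)} → 0 as n → ∞, the following holds asymptotically almost surely: for every ε > 0, the probability that (1−ε)·p(n)·C(n,r) ≤ ex(G_{n,p(n)}^{(r)}, C_{2ℓ}^{(r)}) ≤ (1+ε)·p(n)·C(n,r) tends to 1 as n → ∞ (here C(n,r) is the binomial coefficient). -/
open MeasureTheory Filter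

/-- `E` is the edge set of a linear cycle `C_k^{(r)}`: `k` distinct edges `e_0, …, e_{k-1}`,
each of size `r`, cyclically consecutive edges sharing exactly one vertex, non-consecutive
edges disjoint. -/
def IsLinearCycle {α : Type*} [DecidableEq α] (r k : ℕ) (E : Finset (Finset α)) : Prop :=
  ∃ e : ℕ → Finset α,
    (∀ i < k, ∀ j < k, e i = e j → i = j) ∧
    E = (Finset.range k).image e ∧
    (∀ i < k, (e i).card = r) ∧
    (∀ i < k, (e i ∩ e ((i + 1) % k)).card = 1) ∧
    (∀ i < k, ∀ j < k, i ≠ j → (i + 1) % k ≠ j → (j + 1) % k ≠ i → Disjoint (e i) (e j))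

/-- `G` contains a (not necessarily induced) copy of the linear cycle `C_k^{(r)}`. -/
def ContainsLinearCycle {α : Type*} [DecidableEq α] (r k : ℕ) (G : Finset (Finset α)) : Prop :=
  ∃ E ⊆ G, IsLinearCycle r k E

open Classical in
/-- The maximum number of edges of a `C_k^{(r)}`-free subgraph of `G`. -/
noncomputable def exCycle {α : Type*} [DecidableEq α] (r k : ℕ) (G : Finset (Finset α)) : ℕ :=
  (G.powerset.filter fun H => ¬ ContainsLinearCycle r k H).sup Finset.card

/-- The Bernoulli measure on `Bool` with parameter `p`. -/
noncomputable def bernoulliMeasure (p : ℝ) : Measure Bool :=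
  ENNReal.ofReal p • Measure.dirac true + ENNReal.ofReal (1 - p) • Measure.dirac false

instance (p : ℝ) : IsFiniteMeasure (bernoulliMeasure p) := by
  constructor
  simp [bernoulliMeasure]

/-- The Erdős–Rényi random `r`-graph `G_{n,p}^{(r)}`, as the product Bernoulli measure
on indicator functions of the `r`-element subsets of `Fin n`. -/
noncomputable def randomHypergraph (n r : ℕ) (p : ℝ) :
    Measure ({s : Finset (Fin n) // s.card = r} → Bool) :=
  Measure.pi fun _ => bernoulliMeasure p

/-- The `r`-graph (set of `r`-element edges) determined by a sample point `ω`. -/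
def hypergraphOf {n r : ℕ} (ω : {s : Finset (Fin n) // s.card = r} → Bool) :
    Finset (Finset (Fin n)) :=
  (Finset.univ.filter fun e => ω e = true).image Subtype.val

section Core
set_option linter.unusedSectionVars false
set_option linter.unusedVariables false
variable {I : Type*} [Fintype I] [DecidableEq I]

def wtB (q : ℝ) (b : Bool) : ℝ := if b then q else 1 - q

def indB (b : Bool) : ℝ := if b then 1 else 0

lemma indB_nonneg (b : Bool) : 0 ≤ indB b := by cases b <;> simp [indB]

def wF (q : ℝ) (ω : I → Bool) : ℝ := ∏ i, wtB q (ω i)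

lemma wtB_nonneg {q : ℝ} (h0 : 0 ≤ q) (h1 : q ≤ 1) (b : Bool) : 0 ≤ wtB q b := by
  cases b <;> simp [wtB] <;> linarith

lemma wF_nonneg {q : ℝ} (h0 : 0 ≤ q) (h1 : q ≤ 1) (ω : I → Bool) : 0 ≤ wF q ω :=
  Finset.prod_nonneg fun i _ => wtB_nonneg h0 h1 _

lemma bernoulli_singleton (q : ℝ) (b : Bool) :
    bernoulliMeasure q {b} = ENNReal.ofReal (wtB q b) := by
  cases b <;> simp [bernoulliMeasure, wtB, Measure.dirac_apply']

lemma pi_singleton (q : ℝ) (h0 : 0 ≤ q) (h1 : q ≤ 1) (ω : I → Bool) :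
    Measure.pi (fun _ : I => bernoulliMeasure q) {ω} = ENNReal.ofReal (wF q ω) := by
  rw [← Set.univ_pi_singleton ω, Measure.pi_pi]
  rw [wF, ENNReal.ofReal_prod_of_nonneg fun i _ => wtB_nonneg h0 h1 _]
  simp [bernoulli_singleton]

lemma pi_apply (q : ℝ) (h0 : 0 ≤ q) (h1 : q ≤ 1) (A : Set (I → Bool)) [DecidablePred (· ∈ A)] :
    Measure.pi (fun _ : I => bernoulliMeasure q) A
      = ENNReal.ofReal (∑ ω ∈ Finset.univ.filter (· ∈ A), wF q ω) := by
  have hA : A = ⋃ ω ∈ Finset.univ.filter (· ∈ A), {ω} := by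
    ext x; simp
  conv_lhs => rw [hA]
  rw [measure_biUnion_finset]
  · rw [ENNReal.ofReal_sum_of_nonneg fun ω _ => wF_nonneg h0 h1 _]
    exact Finset.sum_congr rfl fun ω _ => pi_singleton q h0 h1 ω
  · intro x _ y _ hxy
    simp [Function.onFun, Set.disjoint_singleton, hxy]
  · intro b _; exact MeasurableSet.singleton b

lemma sum_prod_bool (g : I → Bool → ℝ) :
    ∑ ω : I → Bool, ∏ i, g i (ω i) = ∏ i, (g i true + g i false) := by
  rw [← Fintype.prod_sum]
  exact Finset.prod_congr rfl fun i _ => by rw [Fintype.sum_bool]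

lemma key_prob {q : ℝ} (h0 : 0 ≤ q) (h1 : q ≤ 1) (S : Finset I) :
    ∑ ω : I → Bool, wF q ω * ∏ i ∈ S, indB (ω i) = q ^ S.card := by
  have h : ∀ ω : I → Bool, wF q ω * ∏ i ∈ S, indB (ω i)
      = ∏ i, (wtB q (ω i) * if i ∈ S then indB (ω i) else 1) := by
    intro ω
    rw [Finset.prod_mul_distrib, wF]
    congr 1
    rw [Finset.prod_ite_mem, Finset.univ_inter]
  simp_rw [h]
  rw [sum_prod_bool (fun i b => wtB q b * if i ∈ S then indB b else 1)]
  have hred : ∀ i : I, ((wtB q true * if i ∈ S then indB true else 1)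
      + (wtB q false * if i ∈ S then indB false else 1)) = if i ∈ S then q else 1 := by
    intro i
    by_cases hi : i ∈ S <;> simp [wtB, indB, hi] <;> ring
  simp only [hred]
  rw [Finset.prod_ite_mem, Finset.univ_inter, Finset.prod_const]

def XV (ω : I → Bool) : ℝ := ∑ i, indB (ω i)

lemma sum_wF {q : ℝ} (h0 : 0 ≤ q) (h1 : q ≤ 1) : ∑ ω : I → Bool, wF q ω = 1 := by
  have := key_prob (I := I) h0 h1 (∅ : Finset I)
  simpa using this

lemma EX_eq {q : ℝ} (h0 : 0 ≤ q) (h1 : q ≤ 1) :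
    ∑ ω : I → Bool, wF q ω * XV ω = (Fintype.card I : ℝ) * q := by
  simp_rw [XV, Finset.mul_sum]
  rw [Finset.sum_comm]
  have h1' : ∀ i : I, ∑ ω : I → Bool, wF q ω * indB (ω i) = q := by
    intro i
    have := key_prob h0 h1 ({i} : Finset I)
    simpa using this
  have h2 : ∀ i : I, ∑ ω : I → Bool, indB (ω i) * wF q ω = q := fun i => by
    conv_rhs => rw [← h1' i]
    exact Finset.sum_congr rfl fun ω _ => mul_comm _ _
  simp only [h1', h2, Finset.sum_const, Finset.card_univ, nsmul_eq_mul]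

lemma EX2_eq {q : ℝ} (h0 : 0 ≤ q) (h1 : q ≤ 1) :
    ∑ ω : I → Bool, wF q ω * (XV ω)^2
      = (Fintype.card I : ℝ) * q + ((Fintype.card I : ℝ)^2 - Fintype.card I) * q^2 := by
  have expand : ∀ ω : I → Bool, wF q ω * (XV ω)^2
      = ∑ i : I, ∑ j : I, wF q ω * (indB (ω i) * indB (ω j)) := by
    intro ω
    rw [XV, sq, Finset.sum_mul_sum]
    simp_rw [Finset.mul_sum]
  simp_rw [expand]
  rw [Finset.sum_comm]
  have swap2 : ∀ i : I, ∑ ω : I → Bool, ∑ j : I, wF q ω * (indB (ω i) * indB (ω j))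
      = ∑ j : I, ∑ ω : I → Bool, wF q ω * (indB (ω i) * indB (ω j)) := by
    intro i; exact Finset.sum_comm
  simp_rw [swap2]
  have hpair : ∀ i j : I, ∑ ω : I → Bool, wF q ω * (indB (ω i) * indB (ω j))
      = if i = j then q else q^2 := by
    intro i j
    by_cases hij : i = j
    · subst hij
      have h := key_prob h0 h1 ({i} : Finset I)
      simp only [Finset.prod_singleton, Finset.card_singleton, pow_one] at h
      rw [if_pos rfl]
      conv_rhs => rw [← h]
      refine Finset.sum_congr rfl fun ω _ => ?_
      cases hb : ω i <;> simp [indB]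
    · have hcard : ({i, j} : Finset I).card = 2 := by
        rw [Finset.card_insert_of_notMem (by simpa using hij), Finset.card_singleton]
      have h := key_prob h0 h1 ({i, j} : Finset I)
      rw [hcard] at h
      rw [if_neg hij]
      conv_rhs => rw [← h]
      refine Finset.sum_congr rfl fun ω _ => ?_
      rw [Finset.prod_insert (by simpa using hij), Finset.prod_singleton]
  simp_rw [hpair]
  have hrow : ∀ i : I, ∑ j : I, (if i = j then q else q^2)
      = (q - q^2) + (Fintype.card I : ℝ) * q^2 := by
    intro i
    have split : ∀ j : I, (if i = j then q else q^2) = (if i = j then q - q^2 else 0) + q^2 := by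
      intro j; by_cases hij : i = j <;> simp [hij]
    simp_rw [split]
    rw [Finset.sum_add_distrib, Finset.sum_ite_eq, if_pos (Finset.mem_univ i),
      Finset.sum_const, Finset.card_univ, nsmul_eq_mul]
  simp_rw [hrow]
  rw [Finset.sum_const, Finset.card_univ, nsmul_eq_mul]
  ring

lemma var_le {q : ℝ} (h0 : 0 ≤ q) (h1 : q ≤ 1) :
    ∑ ω : I → Bool, wF q ω * (XV ω - (Fintype.card I : ℝ) * q)^2
      ≤ (Fintype.card I : ℝ) * q := by
  have expand : ∀ ω : I → Bool, wF q ω * (XV ω - (Fintype.card I : ℝ) * q)^2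
      = wF q ω * (XV ω)^2 - (2 * ((Fintype.card I : ℝ) * q)) * (wF q ω * XV ω)
        + ((Fintype.card I : ℝ) * q)^2 * wF q ω := by
    intro ω; ring
  simp_rw [expand]
  rw [Finset.sum_add_distrib, Finset.sum_sub_distrib, ← Finset.mul_sum, ← Finset.mul_sum,
    EX2_eq h0 h1, EX_eq h0 h1, sum_wF h0 h1]
  have hq2 : (Fintype.card I : ℝ) * q^2 ≥ 0 := by positivity
  nlinarith [sq_nonneg q, sq_nonneg ((Fintype.card I : ℝ) * q)]

lemma sum_subset_le_total {q : ℝ} (h0 : 0 ≤ q) (h1 : q ≤ 1) (F : (I → Bool) → ℝ)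
    (hF : ∀ ω, 0 ≤ F ω) (s : Finset (I → Bool)) :
    ∑ ω ∈ s, wF q ω * F ω ≤ ∑ ω : I → Bool, wF q ω * F ω :=
  Finset.sum_le_sum_of_subset_of_nonneg (Finset.subset_univ s)
    (fun ω _ _ => mul_nonneg (wF_nonneg h0 h1 ω) (hF ω))

/-- generic Markov-type bound -/
lemma markov_bound {q : ℝ} (h0 : 0 ≤ q) (h1 : q ≤ 1) (F : (I → Bool) → ℝ)
    (hF : ∀ ω, 0 ≤ F ω) {t : ℝ} (ht : 0 < t) :
    ∑ ω ∈ Finset.univ.filter (fun ω : I → Bool => ¬ F ω ≤ t), wF q ω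
      ≤ (∑ ω : I → Bool, wF q ω * F ω) / t := by
  rw [le_div_iff₀ ht]
  rw [Finset.sum_mul]
  calc ∑ ω ∈ Finset.univ.filter (fun ω : I → Bool => ¬ F ω ≤ t), wF q ω * t
      ≤ ∑ ω ∈ Finset.univ.filter (fun ω : I → Bool => ¬ F ω ≤ t), wF q ω * F ω := by
        refine Finset.sum_le_sum fun ω hω => ?_
        rw [Finset.mem_filter] at hω
        exact mul_le_mul_of_nonneg_left (le_of_not_ge hω.2) (wF_nonneg h0 h1 ω)
    _ ≤ ∑ ω : I → Bool, wF q ω * F ω := sum_subset_le_total h0 h1 F hF _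

lemma chebyshev {q : ℝ} (h0 : 0 ≤ q) (h1 : q ≤ 1) {t : ℝ} (ht : 0 < t) :
    ∑ ω ∈ Finset.univ.filter (fun ω : I → Bool => ¬ |XV ω - (Fintype.card I : ℝ) * q| ≤ t),
      wF q ω ≤ (Fintype.card I : ℝ) * q / t^2 := by
  set m := (Fintype.card I : ℝ) * q with hm
  have key : ∑ ω ∈ Finset.univ.filter (fun ω : I → Bool => ¬ |XV ω - m| ≤ t), wF q ω
      ≤ (∑ ω : I → Bool, wF q ω * (XV ω - m)^2) / t^2 := by
    rw [le_div_iff₀ (by positivity), Finset.sum_mul]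
    calc ∑ ω ∈ Finset.univ.filter (fun ω : I → Bool => ¬ |XV ω - m| ≤ t), wF q ω * t^2
        ≤ ∑ ω ∈ Finset.univ.filter (fun ω : I → Bool => ¬ |XV ω - m| ≤ t),
            wF q ω * (XV ω - m)^2 := by
          refine Finset.sum_le_sum fun ω hω => ?_
          rw [Finset.mem_filter] at hω
          have habs : t ≤ |XV ω - m| := le_of_not_ge hω.2
          have h2 : t^2 ≤ (XV ω - m)^2 := by
            rw [← sq_abs (XV ω - m)]
            exact pow_le_pow_left₀ ht.le habs 2
          exact mul_le_mul_of_nonneg_left h2 (wF_nonneg h0 h1 ω)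
      _ ≤ ∑ ω : I → Bool, wF q ω * (XV ω - m)^2 :=
          sum_subset_le_total h0 h1 _ (fun ω => sq_nonneg _) _
  refine key.trans ?_
  exact (div_le_div_iff_of_pos_right (by positivity : (0:ℝ) < t^2)).mpr (var_le h0 h1)

end Core

section Comb
open Classical
set_option linter.unusedSectionVars false

/-- sequence form of a linear cycle -/
def SeqCondF {k : ℕ} [NeZero k] (r : ℕ) {n : ℕ} (f : Fin k → Finset (Fin n)) : Prop :=
  Function.Injective f ∧ (∀ i, (f i).card = r) ∧ (∀ i, (f i ∩ f (i + 1)).card = 1) ∧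
    (∀ i j, i ≠ j → i + 1 ≠ j → j + 1 ≠ i → Disjoint (f i) (f j))

lemma fin_val_add_one {k : ℕ} [NeZero k] (i : Fin k) :
    ((i + 1 : Fin k) : ℕ) = (i.val + 1) % k := by
  simp [Fin.add_def, Fin.val_one', Nat.add_mod_mod]

lemma exists_seq_of_isLinearCycle {r k n : ℕ} [NeZero k] {E : Finset (Finset (Fin n))}
    (h : IsLinearCycle r k E) :
    ∃ f : Fin k → Finset (Fin n), SeqCondF r f ∧ E = Finset.image f Finset.univ := by
  obtain ⟨e, hinj, hE, hcard, hint, hdisj⟩ := h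
  refine ⟨fun i => e i.val, ⟨?_, ?_, ?_, ?_⟩, ?_⟩
  · intro i j hij
    exact Fin.ext (hinj i.val i.isLt j.val j.isLt hij)
  · intro i; exact hcard i.val i.isLt
  · intro i
    have := hint i.val i.isLt
    rwa [← fin_val_add_one i] at this
  · intro i j hij h1 h2
    refine hdisj i.val i.isLt j.val j.isLt (fun hv => hij (Fin.ext hv)) ?_ ?_
    · intro hv; apply h1; apply Fin.ext; rw [fin_val_add_one i]; exact hv
    · intro hv; apply h2; apply Fin.ext; rw [fin_val_add_one j]; exact hv
  · rw [hE]
    ext x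
    simp only [Finset.mem_image, Finset.mem_range, Finset.mem_univ, true_and]
    constructor
    · rintro ⟨i, hi, rfl⟩; exact ⟨⟨i, hi⟩, rfl⟩
    · rintro ⟨i, rfl⟩; exact ⟨i.val, i.isLt, rfl⟩

lemma fin_num_ne_zero {k : ℕ} (hk : 4 ≤ k) :
    haveI : NeZero k := ⟨by omega⟩
    ((1 : Fin k) ≠ 0) ∧ ((1 : Fin k) + 1 ≠ 0) ∧ ((1 : Fin k) + 1 + 1 ≠ 0) := by
  haveI : NeZero k := ⟨by omega⟩
  have h1 : (1 : Fin k).val = 1 := by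
    rw [Fin.val_one']; exact Nat.mod_eq_of_lt (by omega)
  have h2 : ((1 : Fin k) + 1).val = 2 := by
    rw [Fin.val_add, h1]; exact Nat.mod_eq_of_lt (by omega)
  have h3 : ((1 : Fin k) + 1 + 1).val = 3 := by
    rw [Fin.val_add, h2, h1]; exact Nat.mod_eq_of_lt (by omega)
  refine ⟨?_, ?_, ?_⟩ <;> rw [Ne, Fin.ext_iff] <;> simp [h1, h2, h3] <;> omega

lemma card_seq_le (r k n : ℕ) [NeZero k] (hk : 4 ≤ k) (hr : 2 ≤ r) :
    (Finset.univ.filter (fun f : Fin k → Finset (Fin n) => SeqCondF r f)).card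
      ≤ (n ^ (r - 1)) ^ k := by
  by_cases hne : (Finset.univ.filter (fun f : Fin k → Finset (Fin n) => SeqCondF r f)).Nonempty
  swap
  · rw [Finset.not_nonempty_iff_eq_empty.mp hne]; simp
  obtain ⟨f0, hf00⟩ := hne
  rw [Finset.mem_filter] at hf00
  have hn : 0 < n := by
    have h1 := hf00.2.2.1 0
    have hle : (f0 0).card ≤ n := by
      simpa using Finset.card_le_card (Finset.subset_univ (f0 0))
    omega
  set z : Fin n := ⟨0, hn⟩ with hz
  set b : (Fin k → Finset (Fin n)) → Fin k → Fin n := fun f i =>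
    if h : (f i ∩ f (i + 1)).Nonempty then (f i ∩ f (i + 1)).min' h else z with hb
  set rest : (Fin k → Finset (Fin n)) → Fin k → Finset (Fin n) := fun f i =>
    f i \ {b f (i - 1), b f i} with hrest
  set emb : (Fin k → Finset (Fin n)) → Fin k → Fin (r - 2) → Fin n := fun f i j =>
    if h : (rest f i).card = r - 2 then (rest f i).orderEmbOfFin h j else z with hemb
  set Φ : (Fin k → Finset (Fin n)) → (Fin k → Fin n × (Fin (r - 2) → Fin n)) := fun f i =>
    (b f i, emb f i) with hΦ
  have hb_mem : ∀ f : Fin k → Finset (Fin n), SeqCondF r f → ∀ i, b f i ∈ f i ∩ f (i + 1) := by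
    intro f hf i
    have hN : (f i ∩ f (i + 1)).Nonempty := Finset.card_pos.mp (by rw [hf.2.2.1 i]; omega)
    simp only [hb, dif_pos hN]
    exact Finset.min'_mem _ hN
  obtain ⟨ne1, ne2, ne3⟩ := fin_num_ne_zero hk
  have hbprev : ∀ f, SeqCondF r f → ∀ i : Fin k, b f (i - 1) ∈ f i := by
    intro f hf i
    have h1 := hb_mem f hf (i - 1)
    rw [sub_add_cancel] at h1
    exact (Finset.mem_inter.mp h1).2
  have hbne : ∀ f, SeqCondF r f → ∀ i : Fin k, b f (i - 1) ≠ b f i := by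
    intro f hf i
    have hm1 : b f (i - 1) ∈ f (i - 1) := (Finset.mem_inter.mp (hb_mem f hf (i - 1))).1
    have hm2 : b f i ∈ f (i + 1) := (Finset.mem_inter.mp (hb_mem f hf i)).2
    have hd : Disjoint (f (i - 1)) (f (i + 1)) := by
      refine hf.2.2.2 (i - 1) (i + 1) ?_ ?_ ?_
      · intro h
        rw [sub_eq_add_neg, add_right_inj] at h
        exact ne2 (eq_neg_iff_add_eq_zero.mp h.symm)
      · intro h
        rw [sub_add_cancel] at h
        exact ne1 (left_eq_add.mp h)
      · intro h
        rw [sub_eq_add_neg, add_assoc, add_right_inj] at h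
        exact ne3 ((add_assoc 1 1 1).trans (neg_eq_iff_add_eq_zero.mp h.symm))
    intro h
    exact (Finset.disjoint_left.mp hd hm1) (h ▸ hm2)
  have hrest_card : ∀ f, SeqCondF r f → ∀ i : Fin k, (rest f i).card = r - 2 := by
    intro f hf i
    have hsub : ({b f (i - 1), b f i} : Finset (Fin n)) ⊆ f i := by
      rw [Finset.insert_subset_iff, Finset.singleton_subset_iff]
      exact ⟨hbprev f hf i, (Finset.mem_inter.mp (hb_mem f hf i)).1⟩
    have hpair : ({b f (i - 1), b f i} : Finset (Fin n)).card = 2 := by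
      rw [Finset.card_insert_of_notMem (by simpa using hbne f hf i), Finset.card_singleton]
    rw [hrest]
    simp only
    rw [Finset.card_sdiff_of_subset hsub, hpair, hf.2.1 i]
  have hrec : ∀ f, SeqCondF r f → ∀ i : Fin k,
      f i = insert (b f (i - 1)) (insert (b f i) (rest f i)) := by
    intro f hf i
    have hm1 := hbprev f hf i
    have hm2 := (Finset.mem_inter.mp (hb_mem f hf i)).1
    ext x
    rw [hrest]
    simp only [Finset.mem_insert, Finset.mem_sdiff, Finset.mem_insert, Finset.mem_singleton]
    constructor
    · intro hx
      by_cases h1 : x = b f (i - 1)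
      · exact Or.inl h1
      by_cases h2 : x = b f i
      · exact Or.inr (Or.inl h2)
      exact Or.inr (Or.inr ⟨hx, fun h => h.elim h1 h2⟩)
    · rintro (rfl | rfl | ⟨hx, _⟩) <;> assumption
  have hemb_img : ∀ f, SeqCondF r f → ∀ i : Fin k,
      Finset.image (emb f i) Finset.univ = rest f i := by
    intro f hf i
    have hc := hrest_card f hf i
    ext x
    simp only [Finset.mem_image, Finset.mem_univ, true_and, hemb, dif_pos hc]
    constructor
    · rintro ⟨j, rfl⟩
      exact Finset.orderEmbOfFin_mem _ hc j
    · intro hx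
      have : x ∈ Set.range ⇑((rest f i).orderEmbOfFin hc) := by
        rw [Finset.range_orderEmbOfFin]; exact hx
      obtain ⟨j, hj⟩ := this
      exact ⟨j, hj⟩
  have hinj : Set.InjOn Φ
      ↑(Finset.univ.filter (fun f : Fin k → Finset (Fin n) => SeqCondF r f)) := by
    intro f hf g hg h
    rw [Finset.mem_coe, Finset.mem_filter] at hf hg
    have hbf : ∀ i, b f i = b g i := by
      intro i
      have := congrFun h i
      rw [hΦ] at this
      exact (Prod.ext_iff.mp this).1
    have hembf : ∀ i, emb f i = emb g i := by
      intro i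
      have := congrFun h i
      rw [hΦ] at this
      exact (Prod.ext_iff.mp this).2
    have hrestf : ∀ i, rest f i = rest g i := by
      intro i
      rw [← hemb_img f hf.2 i, ← hemb_img g hg.2 i, hembf i]
    funext i
    rw [hrec f hf.2 i, hrec g hg.2 i, hbf, hbf, hrestf]
  have hcard := Finset.card_le_card_of_injOn Φ (fun f _ => Finset.mem_univ (Φ f)) hinj
  calc (Finset.univ.filter (fun f : Fin k → Finset (Fin n) => SeqCondF r f)).card
      ≤ (Finset.univ : Finset (Fin k → Fin n × (Fin (r - 2) → Fin n))).card := hcard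
    _ = (n * n ^ (r - 2)) ^ k := by
        rw [Finset.card_univ, Fintype.card_fun]
        simp [Fintype.card_prod, Fintype.card_fun]
    _ = (n ^ (r - 1)) ^ k := by
        congr 1
        have : r - 1 = (r - 2) + 1 := by omega
        rw [this, pow_succ, mul_comm]

lemma exCycle_le_card {n r k : ℕ} (G : Finset (Finset (Fin n))) : exCycle r k G ≤ G.card := by
  classical
  refine Finset.sup_le fun H hH => ?_
  rw [Finset.mem_filter, Finset.mem_powerset] at hH
  exact Finset.card_le_card hH.1

lemma cycle_nonempty {n r k : ℕ} (hk : 0 < k) {E : Finset (Finset (Fin n))}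
    (h : IsLinearCycle r k E) : E.Nonempty := by
  obtain ⟨e, _, hE, _⟩ := h
  exact ⟨e 0, by rw [hE]; exact Finset.mem_image.mpr ⟨0, Finset.mem_range.mpr hk, rfl⟩⟩

lemma card_le_exCycle_add {n r k : ℕ} (hk : 0 < k) (G : Finset (Finset (Fin n))) :
    G.card ≤ exCycle r k G + (G.powerset.filter (fun E => IsLinearCycle r k E)).card := by
  classical
  set C := G.powerset.filter (fun E => IsLinearCycle r k E) with hC
  set del : Finset (Finset (Fin n)) → Finset (Fin n) := fun E =>
    if h : E.Nonempty then h.choose else ∅ with hdel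
  set D := C.image del with hD
  set H := G \ D with hH
  have hfree : ¬ ContainsLinearCycle r k H := by
    rintro ⟨E, hEH, hE⟩
    have hEG : E ⊆ G := hEH.trans (Finset.sdiff_subset)
    have hEC : E ∈ C := by
      rw [hC, Finset.mem_filter, Finset.mem_powerset]; exact ⟨hEG, hE⟩
    have hne : E.Nonempty := cycle_nonempty hk hE
    have hmem : del E ∈ E := by rw [hdel]; simp only [dif_pos hne]; exact hne.choose_spec
    have hmemD : del E ∈ D := Finset.mem_image.mpr ⟨E, hEC, rfl⟩
    have := hEH hmem
    rw [hH, Finset.mem_sdiff] at this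
    exact this.2 hmemD
  have hle : H.card ≤ exCycle r k G := by
    refine Finset.le_sup ?_
    rw [Finset.mem_filter, Finset.mem_powerset]
    exact ⟨Finset.sdiff_subset, hfree⟩
  calc G.card ≤ (G \ D).card + D.card := Finset.card_le_card_sdiff_add_card
    _ ≤ exCycle r k G + C.card := by
        refine Nat.add_le_add hle ?_
        rw [hD]; exact Finset.card_image_le

open Classical in
lemma cycles_le_seqs {n r k : ℕ} [NeZero k] (G : Finset (Finset (Fin n))) :
    (G.powerset.filter (fun E => IsLinearCycle r k E)).card
      ≤ ((Finset.univ.filter (fun f : Fin k → Finset (Fin n) => SeqCondF r f)).filter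
          (fun f => ∀ i, f i ∈ G)).card := by
  set g : Finset (Finset (Fin n)) → (Fin k → Finset (Fin n)) := fun E =>
    if h : IsLinearCycle r k E then (exists_seq_of_isLinearCycle h).choose
    else fun _ => ∅ with hg
  refine Finset.card_le_card_of_injOn g ?_ ?_
  · intro E hE
    rw [Finset.mem_coe, Finset.mem_filter, Finset.mem_powerset] at hE
    obtain ⟨hEG, hcyc⟩ := hE
    have hspec := (exists_seq_of_isLinearCycle hcyc).choose_spec
    rw [Finset.mem_coe, Finset.mem_filter, Finset.mem_filter]
    refine ⟨⟨Finset.mem_univ _, ?_⟩, ?_⟩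
    · rw [hg]; simp only [dif_pos hcyc]; exact hspec.1
    · intro i
      rw [hg]; simp only [dif_pos hcyc]
      exact hEG ((Finset.ext_iff.mp hspec.2 _).mpr
        (Finset.mem_image_of_mem _ (Finset.mem_univ i)))
  · intro E hE E' hE' hEE'
    rw [Finset.mem_coe, Finset.mem_filter, Finset.mem_powerset] at hE hE'
    have h1 := (exists_seq_of_isLinearCycle hE.2).choose_spec
    have h2 := (exists_seq_of_isLinearCycle hE'.2).choose_spec
    rw [hg] at hEE'
    simp only [dif_pos hE.2, dif_pos hE'.2] at hEE'
    exact h1.2.trans ((congrArg (fun f => Finset.image f Finset.univ) hEE').trans h2.2.symm)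

end Comb


section Link
open Classical
set_option linter.unusedSectionVars false

abbrev EdgeIdx (n r : ℕ) := {s : Finset (Fin n) // s.card = r}

lemma card_hypergraphOf_eq {n r : ℕ} (ω : EdgeIdx n r → Bool) :
    ((hypergraphOf ω).card : ℝ) = XV ω := by
  have h1 : (hypergraphOf ω).card
      = (Finset.univ.filter fun e : EdgeIdx n r => ω e = true).card :=
    Finset.card_image_of_injective _ Subtype.val_injective
  rw [h1, Finset.card_filter, XV]
  push_cast
  refine Finset.sum_congr rfl fun i _ => ?_
  by_cases h : ω i <;> simp [h, indB]

lemma EZ_eq {n r k : ℕ} [NeZero k] {q : ℝ} (h0 : 0 ≤ q) (h1 : q ≤ 1) :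
    ∑ ω : EdgeIdx n r → Bool, wF q ω *
        (((Finset.univ.filter (fun f : Fin k → Finset (Fin n) => SeqCondF r f)).filter
            (fun f => ∀ i, f i ∈ hypergraphOf ω)).card : ℝ)
      = ((Finset.univ.filter (fun f : Fin k → Finset (Fin n) => SeqCondF r f)).card : ℝ)
          * q ^ k := by
  set V := Finset.univ.filter (fun f : Fin k → Finset (Fin n) => SeqCondF r f) with hV
  have hcard : ∀ ω : EdgeIdx n r → Bool,
      ((V.filter (fun f => ∀ i, f i ∈ hypergraphOf ω)).card : ℝ)
        = ∑ f ∈ V, (if (∀ i, f i ∈ hypergraphOf ω) then (1:ℝ) else 0) := by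
    intro ω
    rw [Finset.card_filter]
    push_cast
    refine Finset.sum_congr rfl fun f _ => ?_
    by_cases h : ∀ i, f i ∈ hypergraphOf ω <;> simp [h]
  simp_rw [hcard, Finset.mul_sum]
  rw [Finset.sum_comm]
  have hper : ∀ f ∈ V, ∑ ω : EdgeIdx n r → Bool,
      wF q ω * (if (∀ i, f i ∈ hypergraphOf ω) then (1:ℝ) else 0) = q ^ k := by
    intro f hf
    rw [hV, Finset.mem_filter] at hf
    have hsc := hf.2
    have hcardr : ∀ i, (f i).card = r := hsc.2.1
    set S : Finset (EdgeIdx n r) :=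
      Finset.image (fun i => (⟨f i, hcardr i⟩ : EdgeIdx n r)) Finset.univ with hS
    have hinj : Function.Injective (fun i => (⟨f i, hcardr i⟩ : EdgeIdx n r)) := by
      intro i j hij
      exact hsc.1 (congrArg Subtype.val hij)
    have hScard : S.card = k := by
      rw [hS, Finset.card_image_of_injective _ hinj, Finset.card_univ, Fintype.card_fin]
    have hiff : ∀ ω : EdgeIdx n r → Bool,
        (∀ i, f i ∈ hypergraphOf ω) ↔ ∀ s ∈ S, ω s = true := by
      intro ω
      constructor
      · intro h s hs
        rw [hS, Finset.mem_image] at hs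
        obtain ⟨i, _, rfl⟩ := hs
        have := h i
        rw [hypergraphOf, Finset.mem_image] at this
        obtain ⟨e, he, hev⟩ := this
        rw [Finset.mem_filter] at he
        have : e = ⟨f i, hcardr i⟩ := Subtype.ext hev
        rw [← this]; exact he.2
      · intro h i
        rw [hypergraphOf, Finset.mem_image]
        refine ⟨⟨f i, hcardr i⟩, ?_, rfl⟩
        rw [Finset.mem_filter]
        exact ⟨Finset.mem_univ _, h _ (by
          rw [hS]; exact Finset.mem_image_of_mem _ (Finset.mem_univ i))⟩
    have hrw : ∀ ω : EdgeIdx n r → Bool,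
        (if (∀ i, f i ∈ hypergraphOf ω) then (1:ℝ) else 0) = ∏ s ∈ S, indB (ω s) := by
      intro ω
      rw [show (∏ s ∈ S, indB (ω s)) = ∏ s ∈ S, (if ω s = true then (1:ℝ) else 0) from
          Finset.prod_congr rfl fun s _ => rfl,
        Finset.prod_boole]
      by_cases h : ∀ i, f i ∈ hypergraphOf ω
      · rw [if_pos h, if_pos ((hiff ω).mp h)]
      · rw [if_neg h, if_neg (fun hh => h ((hiff ω).mpr hh))]
    simp_rw [hrw]
    rw [key_prob h0 h1 S, hScard]
  rw [Finset.sum_congr rfl hper, Finset.sum_const, nsmul_eq_mul]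

set_option maxHeartbeats 1000000 in
lemma main_bound (n r k : ℕ) (hk : 4 ≤ k) (hr : 2 ≤ r) {q ε : ℝ}
    (h0 : 0 < q) (h1 : q ≤ 1) (hε : 0 < ε) (hN : 0 < (n.choose r : ℝ)) :
    1 - (4 / (ε ^ 2 * (q * (n.choose r : ℝ)))
        + 2 * ((n : ℝ) ^ (r - 1)) ^ k * q ^ k / (ε * (q * (n.choose r : ℝ))))
      ≤ ∑ ω ∈ Finset.univ.filter (fun ω : EdgeIdx n r → Bool =>
          (1 - ε) * q * (n.choose r : ℝ) ≤ (exCycle r k (hypergraphOf ω) : ℝ) ∧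
          (exCycle r k (hypergraphOf ω) : ℝ) ≤ (1 + ε) * q * (n.choose r : ℝ)), wF q ω := by
  haveI : NeZero k := ⟨by omega⟩
  set N := (n.choose r : ℝ) with hNdef
  have hcardI : ((Fintype.card (EdgeIdx n r)) : ℝ) = N := by
    rw [Fintype.card_finset_len, Fintype.card_fin]
  set t := ε / 2 * (q * N) with htdef
  have htpos : 0 < t := by positivity
  set Zc : (EdgeIdx n r → Bool) → ℕ := fun ω =>
    ((Finset.univ.filter (fun f : Fin k → Finset (Fin n) => SeqCondF r f)).filter
      (fun f => ∀ i, f i ∈ hypergraphOf ω)).card with hZc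
  -- Chebyshev bound
  have cheb := chebyshev (I := EdgeIdx n r) h0.le h1 htpos
  simp_rw [hcardI] at cheb
  -- Markov bound
  have mark := markov_bound h0.le h1 (fun ω => (Zc ω : ℝ)) (fun ω => by positivity) htpos
  have EZ := EZ_eq (n := n) (r := r) (k := k) h0.le h1
  have hVle : ((Finset.univ.filter
      (fun f : Fin k → Finset (Fin n) => SeqCondF r f)).card : ℝ) ≤ ((n:ℝ)^(r-1))^k := by
    have := card_seq_le r k n hk hr
    calc ((Finset.univ.filter (fun f : Fin k → Finset (Fin n) => SeqCondF r f)).card : ℝ)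
        ≤ ((n ^ (r-1))^k : ℕ) := by exact_mod_cast this
      _ = ((n:ℝ)^(r-1))^k := by push_cast; ring
  have hq : (0:ℝ) ≤ q ^ k := by positivity
  have markRHS : (∑ ω : EdgeIdx n r → Bool, wF q ω * (Zc ω : ℝ)) / t
      ≤ 2 * ((n : ℝ) ^ (r - 1)) ^ k * q ^ k / (ε * (q * N)) := by
    rw [EZ]
    rw [div_le_div_iff₀ htpos (by positivity)]
    rw [htdef]
    have : ((Finset.univ.filter
        (fun f : Fin k → Finset (Fin n) => SeqCondF r f)).card : ℝ) * q ^ k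
        ≤ ((n:ℝ)^(r-1))^k * q ^ k := mul_le_mul_of_nonneg_right hVle hq
    nlinarith [this, mul_pos h0 hN, sq_nonneg ε]
  have chebRHS : N * q / t ^ 2 ≤ 4 / (ε ^ 2 * (q * N)) := by
    rw [htdef]
    rw [div_le_div_iff₀ (by positivity) (by positivity)]
    ring_nf
    nlinarith [mul_pos h0 hN, sq_nonneg (ε * q * N)]
  -- inclusion of good events
  have hsub : (Finset.univ.filter (fun ω : EdgeIdx n r → Bool =>
        |XV ω - N * q| ≤ t ∧ (Zc ω : ℝ) ≤ t))
      ⊆ (Finset.univ.filter (fun ω : EdgeIdx n r → Bool =>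
          (1 - ε) * q * N ≤ (exCycle r k (hypergraphOf ω) : ℝ) ∧
          (exCycle r k (hypergraphOf ω) : ℝ) ≤ (1 + ε) * q * N)) := by
    intro ω hω
    rw [Finset.mem_filter] at hω ⊢
    obtain ⟨_, hA, hB⟩ := hω
    have habs := abs_le.mp hA
    have hXeq := (card_hypergraphOf_eq ω).symm
    have hExle : (exCycle r k (hypergraphOf ω) : ℝ) ≤ XV ω := by
      rw [hXeq]
      exact_mod_cast exCycle_le_card (hypergraphOf ω)
    have hcyc : ((hypergraphOf ω).card : ℝ)
        ≤ (exCycle r k (hypergraphOf ω) : ℝ) + (Zc ω : ℝ) := by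
      have h1' := card_le_exCycle_add (n := n) (r := r) (k := k) (by omega) (hypergraphOf ω)
      have h2' := cycles_le_seqs (n := n) (r := r) (k := k) (hypergraphOf ω)
      have : (hypergraphOf ω).card ≤ exCycle r k (hypergraphOf ω) + Zc ω :=
        le_trans h1' (Nat.add_le_add_left h2' _)
      exact_mod_cast this
    rw [← hXeq] at hcyc
    refine ⟨Finset.mem_univ _, ?_, ?_⟩
    · rw [htdef] at habs hB
      nlinarith [habs.1, hB, hcyc]
    · rw [htdef] at habs
      have hqN : 0 < q * N := mul_pos h0 hN
      nlinarith [habs.2, hExle]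
  -- lower bound for probability of the good event
  have split := Finset.sum_filter_add_sum_filter_not (Finset.univ : Finset (EdgeIdx n r → Bool))
    (fun ω => |XV ω - N * q| ≤ t ∧ (Zc ω : ℝ) ≤ t) (wF q)
  have hunion : (Finset.univ.filter (fun ω : EdgeIdx n r → Bool =>
        ¬(|XV ω - N * q| ≤ t ∧ (Zc ω : ℝ) ≤ t)))
      ⊆ (Finset.univ.filter (fun ω : EdgeIdx n r → Bool => ¬ |XV ω - N * q| ≤ t))
        ∪ (Finset.univ.filter (fun ω : EdgeIdx n r → Bool => ¬ (Zc ω : ℝ) ≤ t)) := by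
    intro ω hω
    rw [Finset.mem_filter] at hω
    rw [Finset.mem_union, Finset.mem_filter, Finset.mem_filter]
    by_cases h : |XV ω - N * q| ≤ t
    · exact Or.inr ⟨Finset.mem_univ _, fun hh => hω.2 ⟨h, hh⟩⟩
    · exact Or.inl ⟨Finset.mem_univ _, h⟩
  have hbadle : ∑ ω ∈ Finset.univ.filter (fun ω : EdgeIdx n r → Bool =>
        ¬(|XV ω - N * q| ≤ t ∧ (Zc ω : ℝ) ≤ t)), wF q ω
      ≤ 4 / (ε ^ 2 * (q * N))
        + 2 * ((n : ℝ) ^ (r - 1)) ^ k * q ^ k / (ε * (q * N)) := by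
    have step1 : ∑ ω ∈ Finset.univ.filter (fun ω : EdgeIdx n r → Bool =>
          ¬(|XV ω - N * q| ≤ t ∧ (Zc ω : ℝ) ≤ t)), wF q ω
        ≤ ∑ ω ∈ (Finset.univ.filter (fun ω : EdgeIdx n r → Bool => ¬ |XV ω - N * q| ≤ t))
            ∪ (Finset.univ.filter (fun ω : EdgeIdx n r → Bool => ¬ (Zc ω : ℝ) ≤ t)), wF q ω :=
      Finset.sum_le_sum_of_subset_of_nonneg hunion (fun ω _ _ => wF_nonneg h0.le h1 ω)
    have step2 : ∑ ω ∈ (Finset.univ.filter (fun ω : EdgeIdx n r → Bool =>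
          ¬ |XV ω - N * q| ≤ t))
            ∪ (Finset.univ.filter (fun ω : EdgeIdx n r → Bool => ¬ (Zc ω : ℝ) ≤ t)), wF q ω
        ≤ (∑ ω ∈ Finset.univ.filter (fun ω : EdgeIdx n r → Bool =>
            ¬ |XV ω - N * q| ≤ t), wF q ω)
          + ∑ ω ∈ Finset.univ.filter (fun ω : EdgeIdx n r → Bool =>
            ¬ (Zc ω : ℝ) ≤ t), wF q ω := by
      have := Finset.sum_union_inter (s₁ := Finset.univ.filter
          (fun ω : EdgeIdx n r → Bool => ¬ |XV ω - N * q| ≤ t))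
        (s₂ := Finset.univ.filter (fun ω : EdgeIdx n r → Bool => ¬ (Zc ω : ℝ) ≤ t))
        (f := wF q)
      have hnn : 0 ≤ ∑ ω ∈ (Finset.univ.filter (fun ω : EdgeIdx n r → Bool =>
            ¬ |XV ω - N * q| ≤ t))
          ∩ (Finset.univ.filter (fun ω : EdgeIdx n r → Bool => ¬ (Zc ω : ℝ) ≤ t)), wF q ω :=
        Finset.sum_nonneg fun ω _ => wF_nonneg h0.le h1 ω
      linarith
    calc _ ≤ _ := step1
      _ ≤ _ := step2
      _ ≤ N * q / t ^ 2 + (∑ ω : EdgeIdx n r → Bool, wF q ω * (Zc ω : ℝ)) / t :=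
          add_le_add cheb mark
      _ ≤ _ := add_le_add chebRHS markRHS
  have hgood : 1 - (4 / (ε ^ 2 * (q * N))
        + 2 * ((n : ℝ) ^ (r - 1)) ^ k * q ^ k / (ε * (q * N)))
      ≤ ∑ ω ∈ Finset.univ.filter (fun ω : EdgeIdx n r → Bool =>
          |XV ω - N * q| ≤ t ∧ (Zc ω : ℝ) ≤ t), wF q ω := by
    have htot : ∑ ω : EdgeIdx n r → Bool, wF q ω = 1 := sum_wF h0.le h1
    rw [htot] at split
    linarith
  refine hgood.trans ?_
  exact Finset.sum_le_sum_of_subset_of_nonneg hsub (fun ω _ _ => wF_nonneg h0.le h1 ω)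

end Link


section Asymptotics

lemma choose_lower (r : ℕ) (hr : 1 ≤ r) :
    ∀ n : ℕ, 2 * r ≤ n →
      (n : ℝ) ^ r / (2 ^ r * (r.factorial : ℝ)) ≤ (n.choose r : ℝ) := by
  intro n hn
  have hdesc : ((n + 1 - r) ^ r : ℕ) ≤ n.descFactorial r := Nat.pow_sub_le_descFactorial n r
  have heq : (n.descFactorial r : ℝ) = (r.factorial : ℝ) * (n.choose r : ℝ) := by
    exact_mod_cast congrArg (Nat.cast : ℕ → ℝ) (Nat.descFactorial_eq_factorial_mul_choose n r)
  have hhalf : (n : ℝ) / 2 ≤ ((n + 1 - r : ℕ) : ℝ) := by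
    have : r ≤ n + 1 := by omega
    push_cast [this]
    have : (2 * r : ℝ) ≤ n := by exact_mod_cast hn
    linarith
  have hpow : ((n : ℝ) / 2) ^ r ≤ (((n + 1 - r : ℕ) : ℝ)) ^ r := by
    apply pow_le_pow_left₀ (by positivity) hhalf
  have hcast : (((n + 1 - r : ℕ) : ℝ)) ^ r ≤ (n.descFactorial r : ℝ) := by
    exact_mod_cast hdesc
  have hfac : (0:ℝ) < (r.factorial : ℝ) := by exact_mod_cast r.factorial_pos
  have h2 : (0:ℝ) < 2 ^ r := by positivity
  have hchain : (n:ℝ)^r / 2^r ≤ (r.factorial:ℝ) * (n.choose r:ℝ) := by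
    rw [← div_pow]
    exact heq ▸ (hpow.trans hcast)
  rw [div_le_iff₀ h2] at hchain
  rw [div_le_iff₀ (by positivity)]
  nlinarith [hchain]

end Asymptotics

theorem statement0 (l r : ℕ) (hl : 2 ≤ l) (hr : 4 ≤ r)
    (p : ℕ → ℝ) (hp : ∀ n, 0 < p n ∧ p n ≤ 1)
    (hgrow : Tendsto (fun n : ℕ => p n * (n : ℝ) ^ r) atTop atTop)
    (hdecay : Tendsto
      (fun n : ℕ => p n * (n : ℝ) ^ ((r : ℝ) - 1 - 1 / (2 * (l : ℝ) - 1)))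
      atTop (nhds 0))
    (ε : ℝ) (hε : 0 < ε) :
    Tendsto
      (fun n : ℕ => randomHypergraph n r (p n)
        {ω | (1 - ε) * p n * (n.choose r : ℝ) ≤ (exCycle r (2 * l) (hypergraphOf ω) : ℝ) ∧
             (exCycle r (2 * l) (hypergraphOf ω) : ℝ) ≤ (1 + ε) * p n * (n.choose r : ℝ)})
      atTop (nhds 1) := by
  classical
  set k := 2 * l with hkdef
  have hk4 : 4 ≤ k := by omega
  have hr2 : 2 ≤ r := by omega
  haveI : NeZero k := ⟨by omega⟩
  set PP : ℕ → ℝ := fun n => ∑ ω ∈ Finset.univ.filter (fun ω : EdgeIdx n r → Bool =>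
      (1 - ε) * p n * (n.choose r : ℝ) ≤ (exCycle r k (hypergraphOf ω) : ℝ) ∧
      (exCycle r k (hypergraphOf ω) : ℝ) ≤ (1 + ε) * p n * (n.choose r : ℝ)),
      wF (p n) ω with hPP
  have hμ : ∀ n : ℕ, randomHypergraph n r (p n)
      {ω | (1 - ε) * p n * (n.choose r : ℝ) ≤ (exCycle r k (hypergraphOf ω) : ℝ) ∧
           (exCycle r k (hypergraphOf ω) : ℝ) ≤ (1 + ε) * p n * (n.choose r : ℝ)}
      = ENNReal.ofReal (PP n) := by
    intro n
    rw [randomHypergraph, pi_apply (p n) (hp n).1.le (hp n).2]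
    congr 1
  set B : ℕ → ℝ := fun n => 4 / (ε ^ 2 * (p n * (n.choose r : ℝ)))
      + 2 * ((n : ℝ) ^ (r - 1)) ^ k * (p n) ^ k / (ε * (p n * (n.choose r : ℝ))) with hB
  have hub : ∀ n, PP n ≤ 1 := by
    intro n
    calc PP n ≤ ∑ ω : EdgeIdx n r → Bool, wF (p n) ω :=
          Finset.sum_le_sum_of_subset_of_nonneg (Finset.subset_univ _)
            (fun ω _ _ => wF_nonneg (hp n).1.le (hp n).2 ω)
      _ = 1 := sum_wF (hp n).1.le (hp n).2
  have hlb : ∀ n, r ≤ n → 1 - B n ≤ PP n := by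
    intro n hn
    have hN : 0 < (n.choose r : ℝ) := by exact_mod_cast Nat.choose_pos hn
    exact main_bound n r k hk4 hr2 (hp n).1 (hp n).2 hε hN
  -- q * N → ∞
  have hf : (0:ℝ) < (r.factorial : ℝ) := by exact_mod_cast r.factorial_pos
  have hQN : Tendsto (fun n : ℕ => p n * (n.choose r : ℝ)) atTop atTop := by
    have hdiv : Tendsto (fun n : ℕ => (p n * (n:ℝ)^r) / (2^r * r.factorial)) atTop atTop :=
      hgrow.atTop_div_const (by positivity)
    refine tendsto_atTop_mono' atTop ?_ hdiv
    filter_upwards [eventually_ge_atTop (2*r)] with n hn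
    have hcl := choose_lower r (by omega) n hn
    calc p n * (n:ℝ)^r / (2^r * r.factorial) = p n * ((n:ℝ)^r / (2^r*(r.factorial:ℝ))) := by
          ring
      _ ≤ p n * (n.choose r : ℝ) := mul_le_mul_of_nonneg_left hcl (hp n).1.le
  have hT1 : Tendsto (fun n : ℕ => 4 / (ε^2 * (p n * (n.choose r : ℝ)))) atTop (nhds 0) := by
    apply Tendsto.div_atTop (tendsto_const_nhds)
    exact hQN.const_mul_atTop (by positivity)
  -- the decay exponent
  set ρ : ℝ := (r:ℝ) - 1 - 1/(2*(l:ℝ)-1) with hρ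
  have hl2 : (2:ℝ) ≤ (l:ℝ) := by exact_mod_cast hl
  have h2l1 : (2*(l:ℝ)-1) ≠ 0 := by linarith
  have hrk : r ≤ (r-1)*k := by
    have h4 : (r-1)*4 ≤ (r-1)*k := Nat.mul_le_mul_left _ hk4
    omega
  have hexp : ∀ n : ℕ, 1 ≤ n → ((n:ℝ)^((r-1)*k - r : ℕ)) = ((n:ℝ)^ρ)^(k-1 : ℕ) := by
    intro n hn
    have hn0 : (0:ℝ) < n := by exact_mod_cast hn
    have hkR : (k:ℝ) = 2*(l:ℝ) := by rw [hkdef]; push_cast; ring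
    rw [← Real.rpow_natCast ((n:ℝ)^ρ) (k-1), ← Real.rpow_natCast (n:ℝ) ((r-1)*k - r),
      ← Real.rpow_mul hn0.le]
    congr 1
    rw [Nat.cast_sub hrk, Nat.cast_sub (by omega : 1 ≤ k), Nat.cast_mul,
      Nat.cast_sub (by omega : 1 ≤ r), hρ, Nat.cast_one, hkR]
    field_simp
    ring
  
  have hT2core : Tendsto (fun n : ℕ => (p n * (n:ℝ)^ρ)^(k-1 : ℕ)) atTop (nhds 0) := by
    have h := hdecay.pow (k-1)
    rw [zero_pow (by omega : k - 1 ≠ 0)] at h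
    exact h
  set C : ℝ := 2/ε * (2^r * (r.factorial:ℝ)) with hC
  have hT2 : Tendsto (fun n : ℕ => 2 * ((n : ℝ) ^ (r - 1)) ^ k * (p n) ^ k
      / (ε * (p n * (n.choose r : ℝ)))) atTop (nhds 0) := by
    have hCcore : Tendsto (fun n : ℕ => C * (p n * (n:ℝ)^ρ)^(k-1 : ℕ)) atTop (nhds 0) := by
      have h := hT2core.const_mul C
      simpa using h
    refine tendsto_of_tendsto_of_tendsto_of_le_of_le' tendsto_const_nhds hCcore ?_ ?_
    · filter_upwards with n
      have hq := (hp n).1.le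
      exact div_nonneg (mul_nonneg (by positivity) (pow_nonneg hq k))
        (mul_nonneg hε.le (mul_nonneg hq (by positivity)))
    · filter_upwards [eventually_ge_atTop (max (2*r) 1)] with n hn
      have hn2r : 2*r ≤ n := le_trans (le_max_left _ _) hn
      have hn1 : 1 ≤ n := le_trans (le_max_right _ _) hn
      have hq := (hp n).1
      have hcl := choose_lower r (by omega) n hn2r
      have hn0 : (0:ℝ) < n := by exact_mod_cast hn1
      have hnr : (0:ℝ) < (n:ℝ)^r / (2^r*(r.factorial:ℝ)) := by positivity
      have hNpos : (0:ℝ) < (n.choose r:ℝ) := lt_of_lt_of_le hnr hcl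
      have hqk : (p n)^k = (p n)^(k-1) * p n := by
        rw [← pow_succ]; congr 1; omega
      have hstep1 : 2 * ((n : ℝ) ^ (r - 1)) ^ k * (p n) ^ k / (ε * (p n * (n.choose r : ℝ)))
          = 2/ε * (((n : ℝ) ^ (r - 1)) ^ k * (p n)^(k-1)) / (n.choose r : ℝ) := by
        rw [hqk]; field_simp
      rw [hstep1]
      have hnum : 0 ≤ 2/ε * (((n : ℝ) ^ (r - 1)) ^ k * (p n)^(k-1)) := by
        have := hq.le
        positivity
      have hstep2 : 2/ε * (((n : ℝ) ^ (r - 1)) ^ k * (p n)^(k-1)) / (n.choose r : ℝ)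
          ≤ 2/ε * (((n : ℝ) ^ (r - 1)) ^ k * (p n)^(k-1))
            / ((n:ℝ)^r / (2^r*(r.factorial:ℝ))) := by
        gcongr
      refine hstep2.trans ?_
      have hA : ((n : ℝ) ^ (r - 1)) ^ k = (n:ℝ)^((r-1)*k) := (pow_mul _ _ _).symm
      have hsub : (n:ℝ)^((r-1)*k) / (n:ℝ)^r = (n:ℝ)^((r-1)*k - r) :=
        (pow_sub₀ (n:ℝ) (ne_of_gt hn0) hrk).symm
      have hcore : (p n * (n:ℝ)^ρ)^(k-1 : ℕ) = (p n)^(k-1) * (n:ℝ)^((r-1)*k - r) := by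
        rw [mul_pow, ← hexp n hn1]
      rw [hcore, hA, hC]
      rw [← hsub]
      field_simp
      ring_nf
      exact le_refl _
  have hBto : Tendsto B atTop (nhds 0) := by
    rw [hB]
    have h := hT1.add hT2
    simpa using h
  have hPPto : Tendsto PP atTop (nhds 1) := by
    have hlow : Tendsto (fun n => 1 - B n) atTop (nhds 1) := by
      have h := (tendsto_const_nhds (x := (1:ℝ)) (f := (atTop : Filter ℕ))).sub hBto
      simpa using h
    refine tendsto_of_tendsto_of_tendsto_of_le_of_le' hlow tendsto_const_nhds ?_ ?_
    · filter_upwards [eventually_ge_atTop r] with n hn using hlb n hn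
    · filter_upwards with n using hub n
  have hfin := ENNReal.tendsto_ofReal hPPto
  simp only [ENNReal.ofReal_one] at hfin
  simp only [hμ]
  exact hfin
end

section
/- For every integer ℓ ≥ 2 and r ≥ 3, and every function p : ℕ → (0,1] satisfying p(n)·n^{r−1} → ∞ as n → ∞, the following holds: for every ε > 0, asymptotically almost surely G_{n,p(n)}^{(r)} contains a C_{2ℓ}^{(r)}-free subgraph with at least (1−ε)·p(n)·C(n−1, r−1) edges. -/
open MeasureTheory Filter

/-! ### Auxiliary lemmas -/

lemma bernoulli_prob {p : ℝ} (h0 : 0 ≤ p) (h1 : p ≤ 1) :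
    IsProbabilityMeasure (bernoulliMeasure p) := by
  constructor
  simp only [bernoulliMeasure, Measure.add_apply, Measure.smul_apply, Measure.dirac_apply' _
    MeasurableSet.univ, Set.indicator_univ, smul_eq_mul, Pi.one_apply, mul_one]
  rw [← ENNReal.ofReal_add h0 (by linarith)]
  norm_num

lemma bernoulli_integral {p : ℝ} (h0 : 0 ≤ p) (h1 : p ≤ 1) (f : Bool → ℝ) :
    ∫ b, f b ∂bernoulliMeasure p = p * f true + (1 - p) * f false := by
  haveI : IsFiniteMeasure (ENNReal.ofReal p • Measure.dirac (true : Bool)) :=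
    MeasureTheory.Measure.smul_finite _ ENNReal.ofReal_ne_top
  haveI : IsFiniteMeasure (ENNReal.ofReal (1-p) • Measure.dirac (false : Bool)) :=
    MeasureTheory.Measure.smul_finite _ ENNReal.ofReal_ne_top
  rw [bernoulliMeasure, integral_add_measure Integrable.of_finite Integrable.of_finite,
    integral_smul_measure, integral_smul_measure, integral_dirac, integral_dirac,
    ENNReal.toReal_ofReal h0, ENNReal.toReal_ofReal (by linarith)]
  simp [smul_eq_mul]

variable {ι : Type*} [Fintype ι]

lemma prod_integral {q : ℝ} (h0 : 0 ≤ q) (h1 : q ≤ 1) (A : Finset ι) :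
    ∫ ω : ι → Bool, (∏ k ∈ A, (if ω k then (1:ℝ) else 0))
      ∂(Measure.pi fun _ : ι => bernoulliMeasure q) = q ^ A.card := by
  classical
  letI : MeasureSpace Bool := ⟨bernoulliMeasure q⟩
  haveI : IsProbabilityMeasure (volume : Measure Bool) := bernoulli_prob h0 h1
  have h : (Measure.pi fun _ : ι => bernoulliMeasure q) = (volume : Measure (ι → Bool)) :=
    (volume_pi).symm
  rw [h]
  have : ∀ ω : ι → Bool, (∏ k ∈ A, (if ω k then (1:ℝ) else 0)) =
      ∏ k : ι, (fun k b => if k ∈ A then (if b then (1:ℝ) else 0) else 1) k (ω k) := by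
    intro ω
    rw [Finset.prod_ite_mem Finset.univ A, Finset.univ_inter]
  simp_rw [this]
  have hInt := MeasureTheory.integral_fintype_prod_eq_prod (ι := ι)
    (fun k (b : Bool) => if k ∈ A then (if b then (1:ℝ) else 0) else 1)
    (μ := fun _ => (volume : Measure Bool))
  rw [← volume_pi] at hInt
  rw [hInt]
  have : ∀ k : ι, (∫ b, (if k ∈ A then (if b then (1:ℝ) else 0) else 1) ∂(volume : Measure Bool))
      = if k ∈ A then q else 1 := by
    intro k
    by_cases hk : k ∈ A <;> simp only [hk, if_true, if_false]
    · rw [show (volume : Measure Bool) = bernoulliMeasure q from rfl,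
        bernoulli_integral h0 h1]
      norm_num
    · rw [integral_const, smul_eq_mul, mul_one]
      rw [probReal_univ]
  simp_rw [this]
  rw [Finset.prod_ite_mem Finset.univ A, Finset.univ_inter, Finset.prod_const]

lemma exp_X {q : ℝ} (h0 : 0 ≤ q) (h1 : q ≤ 1) (T : Finset ι) :
    ∫ ω : ι → Bool, (∑ i ∈ T, if ω i then (1:ℝ) else 0)
      ∂(Measure.pi fun _ : ι => bernoulliMeasure q) = q * T.card := by
  classical
  haveI : IsProbabilityMeasure (bernoulliMeasure q) := bernoulli_prob h0 h1
  rw [integral_finset_sum T (fun i _ => Integrable.of_finite)]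
  have : ∀ i ∈ T, (∫ ω : ι → Bool, (if ω i then (1:ℝ) else 0)
      ∂(Measure.pi fun _ : ι => bernoulliMeasure q)) = q := by
    intro i _
    have := prod_integral (ι := ι) h0 h1 {i}
    simpa using this
  rw [Finset.sum_congr rfl this, Finset.sum_const, nsmul_eq_mul, mul_comm]

lemma exp_X_sq {q : ℝ} (h0 : 0 ≤ q) (h1 : q ≤ 1) (T : Finset ι) :
    ∫ ω : ι → Bool, (∑ i ∈ T, if ω i then (1:ℝ) else 0) ^ 2
      ∂(Measure.pi fun _ : ι => bernoulliMeasure q)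
      = q * T.card + q ^ 2 * T.card * (T.card - 1) := by
  classical
  haveI : IsProbabilityMeasure (bernoulliMeasure q) := bernoulli_prob h0 h1
  have hexpand : ∀ ω : ι → Bool, (∑ i ∈ T, if ω i then (1:ℝ) else 0) ^ 2
      = ∑ i ∈ T, ∑ j ∈ T, ∏ k ∈ ({i, j} : Finset ι), (if ω k then (1:ℝ) else 0) := by
    intro ω
    rw [sq, Finset.sum_mul_sum]
    refine Finset.sum_congr rfl fun i _ => Finset.sum_congr rfl fun j _ => ?_
    by_cases hij : i = j
    · subst hij
      simp only [Finset.pair_eq_singleton, Finset.prod_singleton]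
      by_cases h : ω i <;> simp [h]
    · rw [Finset.prod_pair hij]
  simp_rw [hexpand]
  rw [integral_finset_sum T (fun i _ => Integrable.of_finite)]
  have : ∀ i ∈ T, (∫ ω : ι → Bool, ∑ j ∈ T, ∏ k ∈ ({i, j} : Finset ι),
        (if ω k then (1:ℝ) else 0) ∂(Measure.pi fun _ : ι => bernoulliMeasure q))
      = q + q ^ 2 * (T.card - 1) := by
    intro i hi
    rw [integral_finset_sum T (fun j _ => Integrable.of_finite)]
    have h2 : ∀ j ∈ T, (∫ ω : ι → Bool, ∏ k ∈ ({i, j} : Finset ι),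
        (if ω k then (1:ℝ) else 0) ∂(Measure.pi fun _ : ι => bernoulliMeasure q))
        = q ^ (({i, j} : Finset ι).card) := fun j _ => prod_integral h0 h1 _
    rw [Finset.sum_congr rfl h2, ← Finset.add_sum_erase _ _ hi]
    have : ∀ j ∈ T.erase i, q ^ (({i, j} : Finset ι).card) = q ^ 2 := by
      intro j hj
      rw [Finset.card_pair (Finset.ne_of_mem_erase hj).symm]
    rw [Finset.sum_congr rfl this, Finset.sum_const, Finset.card_erase_of_mem hi]
    have h1le : 1 ≤ T.card := Finset.card_pos.2 ⟨i, hi⟩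
    simp only [Finset.pair_eq_singleton, Finset.card_singleton, pow_one, nsmul_eq_mul]
    rw [Nat.cast_sub h1le]
    push_cast
    ring
  rw [Finset.sum_congr rfl this, Finset.sum_const, nsmul_eq_mul]
  ring

open ProbabilityTheory in
lemma cheb {q : ℝ} (h0 : 0 ≤ q) (h1 : q ≤ 1) (T : Finset ι) {c : ℝ} (hc : 0 < c) :
    (Measure.pi fun _ : ι => bernoulliMeasure q)
      {ω | c ≤ |(∑ i ∈ T, if ω i then (1:ℝ) else 0) - q * T.card|}
      ≤ ENNReal.ofReal (q * T.card / c ^ 2) := by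
  classical
  haveI : IsProbabilityMeasure (bernoulliMeasure q) := bernoulli_prob h0 h1
  set μ := (Measure.pi fun _ : ι => bernoulliMeasure q) with hμ
  set X : (ι → Bool) → ℝ := fun ω => ∑ i ∈ T, if ω i then (1:ℝ) else 0 with hX
  have hmem : MemLp X 2 μ := by
    refine MemLp.of_bound .of_discrete (T.card : ℝ) (Filter.Eventually.of_forall fun ω => ?_)
    rw [Real.norm_eq_abs, abs_le]
    constructor
    · exact le_trans (neg_nonpos.2 (Nat.cast_nonneg _))
        (Finset.sum_nonneg fun i _ => by positivity)
    · calc X ω ≤ ∑ i ∈ T, 1 := Finset.sum_le_sum fun i _ => by split <;> norm_num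
        _ = (T.card : ℝ) := by simp
  have hEX : μ[X] = q * T.card := exp_X h0 h1 T
  have hvar : variance X μ ≤ q * T.card := by
    rw [variance_eq_sub hmem, hEX]
    simp only [Pi.pow_apply, hX]
    rw [exp_X_sq h0 h1 T]
    nlinarith [sq_nonneg (q * (T.card : ℝ)), sq_nonneg q, mul_nonneg h0 (Nat.cast_nonneg T.card),
      mul_nonneg (mul_nonneg h0 h0) (Nat.cast_nonneg T.card)]
  calc μ {ω | c ≤ |X ω - q * T.card|} = μ {ω | c ≤ |X ω - μ[X]|} := by rw [hEX]
    _ ≤ ENNReal.ofReal (variance X μ / c ^ 2) := meas_ge_le_variance_div_sq hmem hc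
    _ ≤ ENNReal.ofReal (q * T.card / c ^ 2) :=
        ENNReal.ofReal_le_ofReal (by gcongr)

/-- A family of sets sharing a common vertex contains no linear cycle of length ≥ 4. -/
lemma star_free {α : Type*} [DecidableEq α] (r k : ℕ) (hk : 4 ≤ k) (v : α)
    (H : Finset (Finset α)) (hH : ∀ x ∈ H, v ∈ x) : ¬ ContainsLinearCycle r k H := by
  rintro ⟨E, hE, e, hinj, hEeq, hcard, hcons, hdisj⟩
  have he0 : e 0 ∈ E := by
    rw [hEeq]; exact Finset.mem_image.2 ⟨0, Finset.mem_range.2 (by omega), rfl⟩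
  have he2 : e 2 ∈ E := by
    rw [hEeq]; exact Finset.mem_image.2 ⟨2, Finset.mem_range.2 (by omega), rfl⟩
  have hd : Disjoint (e 0) (e 2) := by
    refine hdisj 0 (by omega) 2 (by omega) (by omega) ?_ ?_
    · rw [Nat.mod_eq_of_lt (by omega)]; omega
    · rw [Nat.mod_eq_of_lt (by omega)]; omega
  exact Finset.disjoint_left.1 hd (hH _ (hE he0)) (hH _ (hE he2))

/-- The number of `r`-subsets of `Fin n` containing a fixed vertex. -/
lemma card_star (n r : ℕ) (hr : 1 ≤ r) (v : Fin n) :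
    (Finset.univ.filter
      (fun s : {s : Finset (Fin n) // s.card = r} => v ∈ s.1)).card
      = (n - 1).choose (r - 1) := by
  classical
  have := Finset.card_bij (t := (Finset.univ.erase v).powersetCard (r - 1))
    (fun (s : {s : Finset (Fin n) // s.card = r}) (_ : s ∈ Finset.univ.filter
      (fun s : {s : Finset (Fin n) // s.card = r} => v ∈ s.1)) => s.1.erase v)
    ?_ ?_ ?_
  · rw [this, Finset.card_powersetCard, Finset.card_erase_of_mem (Finset.mem_univ v),
      Finset.card_univ, Fintype.card_fin]
  · intro s hs
    rw [Finset.mem_filter] at hs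
    rw [Finset.mem_powersetCard]
    exact ⟨Finset.erase_subset_erase v (Finset.subset_univ _),
      by rw [Finset.card_erase_of_mem hs.2, s.2]⟩
  · intro a ha b hb hab
    have ha' := (Finset.mem_filter.1 ha).2
    have hb' := (Finset.mem_filter.1 hb).2
    apply Subtype.ext
    rw [← Finset.insert_erase ha', ← Finset.insert_erase hb', hab]
  · intro t ht
    rw [Finset.mem_powersetCard] at ht
    have hv : v ∉ t := fun h => (Finset.mem_erase.1 (ht.1 h)).1 rfl
    refine ⟨⟨insert v t, ?_⟩, Finset.mem_filter.2 ⟨Finset.mem_univ _,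
      Finset.mem_insert_self _ _⟩, ?_⟩
    · rw [Finset.card_insert_of_notMem hv, ht.2]; omega
    · exact Finset.erase_insert hv

lemma main_bound_s7 (l r n : ℕ) (hl : 2 ≤ l) (hr : 3 ≤ r) (q ε : ℝ)
    (hq0 : 0 < q) (hq1 : q ≤ 1) (hε : 0 < ε) (hn : r ≤ n) :
    randomHypergraph n r q
      {ω | ∃ H ⊆ hypergraphOf ω, ¬ ContainsLinearCycle r (2 * l) H ∧
            (1 - ε) * q * ((n - 1).choose (r - 1) : ℝ) ≤ (H.card : ℝ)}ᶜ
      ≤ ENNReal.ofReal (q * ((n - 1).choose (r - 1) : ℝ)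
          / (ε * (q * ((n - 1).choose (r - 1) : ℝ))) ^ 2) := by
  classical
  have hn1 : 0 < n := by omega
  set v : Fin n := ⟨0, hn1⟩ with hv
  set T : Finset {s : Finset (Fin n) // s.card = r} :=
    Finset.univ.filter (fun s => v ∈ s.1) with hTdef
  have hT : T.card = (n - 1).choose (r - 1) := card_star n r (by omega) v
  have hNpos : (0 : ℝ) < ((n - 1).choose (r - 1) : ℝ) := by
    exact_mod_cast Nat.choose_pos (by omega)
  have hc : (0 : ℝ) < ε * (q * ((n - 1).choose (r - 1) : ℝ)) := by positivity
  have hsubset : {ω : {s : Finset (Fin n) // s.card = r} → Bool |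
        ∃ H ⊆ hypergraphOf ω, ¬ ContainsLinearCycle r (2 * l) H ∧
          (1 - ε) * q * ((n - 1).choose (r - 1) : ℝ) ≤ (H.card : ℝ)}ᶜ ⊆
      {ω | ε * (q * ((n - 1).choose (r - 1) : ℝ)) ≤
        |(∑ i ∈ T, if ω i then (1:ℝ) else 0) - q * ((n - 1).choose (r - 1) : ℝ)|} := by
    intro ω hω
    by_contra hbad
    apply hω
    simp only [Set.mem_setOf_eq, not_le] at hbad
    set X : ℝ := ∑ i ∈ T, if ω i then (1:ℝ) else 0 with hXdef
    refine Set.mem_setOf_eq ▸ ⟨(Finset.univ.filter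
      (fun s : {s : Finset (Fin n) // s.card = r} => ω s = true ∧ v ∈ s.1)).image
        Subtype.val, ?_, ?_, ?_⟩
    · intro x hx
      rcases Finset.mem_image.1 hx with ⟨s, hs, rfl⟩
      exact Finset.mem_image.2 ⟨s, Finset.mem_filter.2
        ⟨Finset.mem_univ _, (Finset.mem_filter.1 hs).2.1⟩, rfl⟩
    · refine star_free r (2 * l) (by omega) v _ ?_
      intro x hx
      rcases Finset.mem_image.1 hx with ⟨s, hs, rfl⟩
      exact (Finset.mem_filter.1 hs).2.2
    · have hcard : ((Finset.univ.filter
          (fun s : {s : Finset (Fin n) // s.card = r} => ω s = true ∧ v ∈ s.1)).image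
            Subtype.val).card = (T.filter (fun s => ω s = true)).card := by
        rw [Finset.card_image_of_injective _ Subtype.val_injective, hTdef,
          Finset.filter_filter]
        congr 1
        apply Finset.filter_congr
        intro s _
        simp [and_comm]
      have hXcard : X = ((T.filter (fun s => ω s = true)).card : ℝ) := by
        rw [hXdef, Finset.sum_boole]
      rw [hcard, ← hXcard]
      have habs := abs_lt.1 hbad
      nlinarith [habs.1, habs.2]
  refine le_trans (measure_mono hsubset) ?_
  have h2 := cheb (ι := {s : Finset (Fin n) // s.card = r}) hq0.le hq1 T hc
  rw [hT] at h2
  exact h2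

theorem statement7 (l r : ℕ) (hl : 2 ≤ l) (hr : 3 ≤ r)
    (p : ℕ → ℝ) (hp : ∀ n, 0 < p n ∧ p n ≤ 1)
    (hgrow : Tendsto (fun n : ℕ => p n * (n : ℝ) ^ (r - 1)) atTop atTop)
    (ε : ℝ) (hε : 0 < ε) :
    Tendsto
      (fun n : ℕ => randomHypergraph n r (p n)
        {ω | ∃ H ⊆ hypergraphOf ω, ¬ ContainsLinearCycle r (2 * l) H ∧
              (1 - ε) * p n * ((n - 1).choose (r - 1) : ℝ) ≤ (H.card : ℝ)})
      atTop (nhds 1) := by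
  classical
  set N : ℕ → ℝ := fun n => ((n - 1).choose (r - 1) : ℝ) with hNdef
  -- Step 1 : p n * N n → ∞
  have hbig : Tendsto (fun n => p n * N n) atTop atTop := by
    set C : ℝ := ((2 ^ (r - 1) * (r - 1).factorial : ℕ) : ℝ) with hCdef
    have hCpos : (0 : ℝ) < C := by positivity
    refine tendsto_atTop_mono' atTop ?_
      ((hgrow.atTop_div_const hCpos))
    filter_upwards [eventually_ge_atTop (2 * r)] with n hn
    have hnat : n ^ (r - 1) ≤ 2 ^ (r - 1) * (r - 1).factorial * (n - 1).choose (r - 1) := by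
      have h1 : (n - (r - 1)) ^ (r - 1) ≤ (n - 1).descFactorial (r - 1) := by
        have := Nat.pow_sub_le_descFactorial (n - 1) (r - 1)
        have heq : n - 1 + 1 - (r - 1) = n - (r - 1) := by omega
        rwa [heq] at this
      have h2 : n ≤ 2 * (n - (r - 1)) := by omega
      calc n ^ (r - 1) ≤ (2 * (n - (r - 1))) ^ (r - 1) := Nat.pow_le_pow_left h2 _
        _ = 2 ^ (r - 1) * (n - (r - 1)) ^ (r - 1) := by rw [Nat.mul_pow]
        _ ≤ 2 ^ (r - 1) * (n - 1).descFactorial (r - 1) := Nat.mul_le_mul_left _ h1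
        _ = 2 ^ (r - 1) * ((r - 1).factorial * (n - 1).choose (r - 1)) := by
            rw [Nat.descFactorial_eq_factorial_mul_choose]
        _ = 2 ^ (r - 1) * (r - 1).factorial * (n - 1).choose (r - 1) := by ring
    have hreal : (n : ℝ) ^ (r - 1) ≤ C * N n := by
      simp only [hCdef, hNdef]
      exact_mod_cast hnat
    have hp0 := (hp n).1
    rw [div_le_iff₀ hCpos]
    calc p n * (n : ℝ) ^ (r - 1) ≤ p n * (C * N n) := by
          exact mul_le_mul_of_nonneg_left hreal hp0.le
      _ = p n * N n * C := by ring
  -- Step 2 : the error bound tends to 0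
  have herr : Tendsto (fun n => ENNReal.ofReal (p n * N n / (ε * (p n * N n)) ^ 2))
      atTop (nhds 0) := by
    have h1 : Tendsto (fun n => ε ^ 2 * (p n * N n)) atTop atTop :=
      hbig.const_mul_atTop (by positivity)
    have h2 : Tendsto (fun n => (ε ^ 2 * (p n * N n))⁻¹) atTop (nhds 0) :=
      h1.inv_tendsto_atTop
    have h3 : Tendsto (fun n => ENNReal.ofReal ((ε ^ 2 * (p n * N n))⁻¹)) atTop (nhds 0) := by
      have := (ENNReal.continuous_ofReal.tendsto 0).comp h2
      simpa [Function.comp_def] using this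
    refine h3.congr' ?_
    filter_upwards [hbig.eventually_gt_atTop 0] with n hn
    rw [eq_comm]
    congr 1
    field_simp
  -- Step 3 : squeeze for the complement
  have hcompl : Tendsto (fun n => randomHypergraph n r (p n)
      {ω | ∃ H ⊆ hypergraphOf ω, ¬ ContainsLinearCycle r (2 * l) H ∧
          (1 - ε) * p n * ((n - 1).choose (r - 1) : ℝ) ≤ (H.card : ℝ)}ᶜ) atTop (nhds 0) := by
    refine tendsto_of_tendsto_of_tendsto_of_le_of_le' tendsto_const_nhds herr
      (Eventually.of_forall fun n => zero_le) ?_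
    filter_upwards [eventually_ge_atTop r] with n hn
    exact main_bound_s7 l r n hl hr (p n) ε (hp n).1 (hp n).2 hε hn
  -- Step 4 : conclude
  have hmeas : ∀ n : ℕ, randomHypergraph n r (p n)
      {ω | ∃ H ⊆ hypergraphOf ω, ¬ ContainsLinearCycle r (2 * l) H ∧
          (1 - ε) * p n * ((n - 1).choose (r - 1) : ℝ) ≤ (H.card : ℝ)} =
      1 - randomHypergraph n r (p n)
      {ω | ∃ H ⊆ hypergraphOf ω, ¬ ContainsLinearCycle r (2 * l) H ∧
          (1 - ε) * p n * ((n - 1).choose (r - 1) : ℝ) ≤ (H.card : ℝ)}ᶜ := by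
    intro n
    haveI : IsProbabilityMeasure (bernoulliMeasure (p n)) := bernoulli_prob (hp n).1.le (hp n).2
    haveI : IsProbabilityMeasure (randomHypergraph n r (p n)) := by
      rw [randomHypergraph]; infer_instance
    have := prob_compl_eq_one_sub (μ := randomHypergraph n r (p n))
      (s := {ω | ∃ H ⊆ hypergraphOf ω, ¬ ContainsLinearCycle r (2 * l) H ∧
          (1 - ε) * p n * ((n - 1).choose (r - 1) : ℝ) ≤ (H.card : ℝ)}ᶜ)
      (Set.toFinite _).measurableSet
    rw [compl_compl] at this
    exact this
  have : Tendsto (fun n => 1 - randomHypergraph n r (p n)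
      {ω | ∃ H ⊆ hypergraphOf ω, ¬ ContainsLinearCycle r (2 * l) H ∧
          (1 - ε) * p n * ((n - 1).choose (r - 1) : ℝ) ≤ (H.card : ℝ)}ᶜ) atTop (nhds 1) := by
    have h1 : Tendsto (fun _ : ℕ => (1 : ENNReal)) atTop (nhds 1) := tendsto_const_nhds
    have := ENNReal.Tendsto.sub h1 hcompl (Or.inl ENNReal.one_ne_top)
    simpa using this
  exact this.congr fun n => (hmeas n).symm
end

section
/- For every integer r ≥ 4 there exist a constant c > 0 and n_0 ∈ ℕ such that the following holds for all n ≥ n_0 and all reals K ≥ 1. Set R = C(r,2) and α_r = r!/(2·r^{R+r}). Let H' be an r-partite r-graph on at most n vertices with parts U_1, …, U_r satisfying |U_1| ≥ |U_2| ≥ … ≥ |U_r|, with no isolated vertices, with e(H') ≥ α_r·K·n^{r−1}/(log n)^R, and suppose that for every pair 1 ≤ i < j ≤ r there is a real Δ_{ij} ≥ 1 such that every pair (v_i, v_j) ∈ U_i × U_j that is contained in some edge of H' satisfies Δ_{ij}/(2R·(r·log n)^R) ≤ d_{H'}(v_i, v_j) ≤ 2·Δ_{ij}. Then there exists j ∈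 {2, …, r} such that |∂_{U_1,U_j}(H')| ≥ K^{1/(r−1)}·|U_1|^{2−1/(r−1)}/(log n)^c. -/
open MeasureTheory Filter

/-- `H` is an `r`-partite `r`-graph with parts `U 0, …, U (r-1)`: the parts are pairwise
disjoint and every edge has exactly one vertex in each part. -/
def IsPartiteWith {α : Type*} [DecidableEq α] (r : ℕ) (U : ℕ → Finset α)
    (H : Finset (Finset α)) : Prop :=
  (∀ i < r, ∀ j < r, i ≠ j → Disjoint (U i) (U j)) ∧
  ∀ e ∈ H, e.card = r ∧ (∀ i < r, (e ∩ U i).card = 1)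

/-- The codegree of the pair `u, v`: the number of edges of `H` containing both. -/
def codeg {α : Type*} [DecidableEq α] (H : Finset (Finset α)) (u v : α) : ℕ :=
  (H.filter fun e => u ∈ e ∧ v ∈ e).card

/-- The shadow `∂_{U,W}(H)`: pairs `(u, v) ∈ U × W` contained together in some edge of `H`. -/
def shadowPairs {α : Type*} [DecidableEq α] (H : Finset (Finset α)) (U W : Finset α) :
    Finset (α × α) :=
  (U ×ˢ W).filter fun x => ∃ e ∈ H, x.1 ∈ e ∧ x.2 ∈ e


private lemma sum_card_filter_comm' {α β : Type*} (S : Finset α) (H : Finset β) (P : α → β → Prop)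
    [∀ x e, Decidable (P x e)] :
    ∑ x ∈ S, (H.filter fun e => P x e).card = ∑ e ∈ H, (S.filter fun x => P x e).card := by
  simp only [Finset.card_filter]
  exact Finset.sum_comm

private lemma edge_decomp' {n r : ℕ} (U : ℕ → Finset (Fin n))
    (hdisj : ∀ i < r, ∀ j < r, i ≠ j → Disjoint (U i) (U j)) (e : Finset (Fin n))
    (hcard : e.card = r) (hone : ∀ i < r, (e ∩ U i).card = 1) :
    e = (Finset.range r).biUnion fun j => e ∩ U j := by
  have hsub : ((Finset.range r).biUnion fun j => e ∩ U j) ⊆ e := by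
    intro x hx
    rcases Finset.mem_biUnion.mp hx with ⟨j, _, hj⟩
    exact (Finset.mem_inter.mp hj).1
  refine (Finset.eq_of_subset_of_card_le hsub ?_).symm
  rw [Finset.card_biUnion]
  · rw [hcard]
    calc r = ∑ _j ∈ Finset.range r, 1 := by simp
      _ ≤ ∑ j ∈ Finset.range r, (e ∩ U j).card := by
          apply Finset.sum_le_sum
          intro j hj
          rw [hone j (Finset.mem_range.mp hj)]
  · intro i hi j hj hij
    exact Finset.disjoint_left.mpr fun a ha ha' =>
      (Finset.disjoint_left.mp
        (hdisj i (Finset.mem_range.mp hi) j (Finset.mem_range.mp hj) hij)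
        (Finset.mem_inter.mp ha).2 (Finset.mem_inter.mp ha').2)

private lemma core_ineq (s R' c m lam D A E K L S alp : ℝ)
    (hs : 3 ≤ s) (hm : 1 ≤ m) (hD : 1 ≤ D) (hA : 1 ≤ A) (hK : 1 ≤ K)
    (halp : 0 < alp) (hL : 1 ≤ L) (hlam : 0 < lam)
    (h1 : m ^ s ≤ lam ^ s * D ^ (s - 1))
    (h2 : A * D ≤ E)
    (h3 : alp * K * A ^ s / L ^ R' ≤ E)
    (h4 : E ≤ S * (2 * m))
    (hnum : 2 * lam * L ^ (R' / s) ≤ alp ^ (1 / s) * L ^ c) :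
    K ^ (1 / s) * A ^ (2 - 1 / s) / L ^ c ≤ S := by
  have hs0 : (0:ℝ) < s := by linarith
  have hm0 : (0:ℝ) < m := by linarith
  have hD0 : (0:ℝ) < D := by linarith
  have hA0 : (0:ℝ) < A := by linarith
  have hK0 : (0:ℝ) < K := by linarith
  have hL0 : (0:ℝ) < L := by linarith
  have hE0 : (0:ℝ) < E := by
    have h1 : (1:ℝ) * 1 ≤ A * D := mul_le_mul hA hD (by norm_num) (by linarith)
    linarith
  set P : ℝ := 1 / s with hPdef
  set Q : ℝ := (s - 1) / s with hQdef
  have hPQ : Q + P = 1 := by rw [hQdef, hPdef]; field_simp; ring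
  have hQ0 : 0 ≤ Q := div_nonneg (by linarith) hs0.le
  have hP0 : 0 < P := by positivity
  have hF1 : m * A ^ Q ≤ lam * E ^ Q := by
    have h := Real.rpow_le_rpow (by positivity) h1 hP0.le
    rw [← Real.rpow_mul hm0.le, mul_one_div, div_self hs0.ne', Real.rpow_one,
      Real.mul_rpow (by positivity) (by positivity),
      ← Real.rpow_mul hlam.le, mul_one_div, div_self hs0.ne', Real.rpow_one,
      ← Real.rpow_mul hD0.le, mul_one_div] at h
    have e2 : D ^ Q ≤ (E / A) ^ Q :=
      Real.rpow_le_rpow hD0.le ((le_div_iff₀ hA0).mpr (by linarith)) hQ0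
    have e3 : (E / A) ^ Q = E ^ Q / A ^ Q := Real.div_rpow hE0.le hA0.le Q
    have hAQ : (0:ℝ) < A ^ Q := by positivity
    have : m ≤ lam * E ^ Q / A ^ Q := by
      calc m ≤ lam * D ^ Q := h
      _ ≤ lam * (E ^ Q / A ^ Q) := by rw [← e3]; exact mul_le_mul_of_nonneg_left e2 hlam.le
      _ = lam * E ^ Q / A ^ Q := by ring
    exact (le_div_iff₀ hAQ).mp this
  have hF2 : alp ^ P * K ^ P * A ≤ E ^ P * L ^ (R' / s) := by
    have h := Real.rpow_le_rpow (by positivity) h3 hP0.le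
    rw [Real.div_rpow (by positivity) (by positivity),
      Real.mul_rpow (by positivity) (by positivity),
      Real.mul_rpow (by positivity) (by positivity),
      ← Real.rpow_mul hA0.le, mul_one_div, div_self hs0.ne', Real.rpow_one,
      ← Real.rpow_mul hL0.le, mul_one_div] at h
    have hLR : (0:ℝ) < L ^ (R' / s) := by positivity
    have := (div_le_iff₀ hLR).mp h
    linarith [this]
  have hF3 : E ^ Q * E ^ P = E := by
    rw [← Real.rpow_add hE0, hPQ, Real.rpow_one]
  have hX0 : (0:ℝ) < K ^ P * A * E ^ Q := by positivity
  have t1 : (2 * lam * L ^ (R' / s)) * (K ^ P * A * E ^ Q) ≤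
      (alp ^ (1 / s) * L ^ c) * (K ^ P * A * E ^ Q) :=
    mul_le_mul_of_nonneg_right hnum hX0.le
  have t3 : (alp ^ P * K ^ P * A) * (L ^ c * E ^ Q) ≤
      (E ^ P * L ^ (R' / s)) * (L ^ c * E ^ Q) :=
    mul_le_mul_of_nonneg_right hF2 (by positivity)
  have t5 : (2 * lam) * (K ^ P * A * E ^ Q) * L ^ (R' / s) ≤ (E * L ^ c) * L ^ (R' / s) := by
    calc (2 * lam) * (K ^ P * A * E ^ Q) * L ^ (R' / s)
        = (2 * lam * L ^ (R' / s)) * (K ^ P * A * E ^ Q) := by ring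
      _ ≤ (alp ^ (1 / s) * L ^ c) * (K ^ P * A * E ^ Q) := t1
      _ = (alp ^ P * K ^ P * A) * (L ^ c * E ^ Q) := by rw [hPdef]; ring
      _ ≤ (E ^ P * L ^ (R' / s)) * (L ^ c * E ^ Q) := t3
      _ = (E ^ Q * E ^ P * L ^ c) * L ^ (R' / s) := by ring
      _ = (E * L ^ c) * L ^ (R' / s) := by rw [hF3]
  have t6 : (2 * lam) * (K ^ P * A * E ^ Q) ≤ E * L ^ c :=
    le_of_mul_le_mul_right t5 (by positivity)
  have key' : 2 * m * (K ^ P * A * A ^ Q) ≤ E * L ^ c := by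
    calc 2 * m * (K ^ P * A * A ^ Q) = (m * A ^ Q) * (2 * (K ^ P * A)) := by ring
      _ ≤ (lam * E ^ Q) * (2 * (K ^ P * A)) := mul_le_mul_of_nonneg_right hF1 (by positivity)
      _ = (2 * lam) * (K ^ P * A * E ^ Q) := by ring
      _ ≤ E * L ^ c := t6
  have hA2 : A ^ (2 - P) = A * A ^ Q := by
    have h21 : (2:ℝ) - P = 1 + Q := by rw [hPdef, hQdef]; field_simp; ring
    rw [h21, Real.rpow_add hA0, Real.rpow_one]
  have hLc : (0:ℝ) < L ^ c := by positivity
  have key2 : K ^ P * A ^ (2 - P) * (2 * m) ≤ E * L ^ c := by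
    rw [hA2]
    calc K ^ P * (A * A ^ Q) * (2 * m) = 2 * m * (K ^ P * A * A ^ Q) := by ring
      _ ≤ E * L ^ c := key'
  rw [div_le_iff₀ hLc]
  have hfin : K ^ P * A ^ (2 - P) * (2 * m) ≤ (S * L ^ c) * (2 * m) := by
    calc K ^ P * A ^ (2 - P) * (2 * m) ≤ E * L ^ c := key2
      _ ≤ (S * (2 * m)) * L ^ c := mul_le_mul_of_nonneg_right h4 hLc.le
      _ = (S * L ^ c) * (2 * m) := by ring
  exact le_of_mul_le_mul_right hfin (by linarith)

set_option maxHeartbeats 2000000 in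
theorem statement10 (r : ℕ) (hr : 4 ≤ r) :
    ∃ (c : ℝ) (n₀ : ℕ), 0 < c ∧
      ∀ n : ℕ, n₀ ≤ n → ∀ K : ℝ, 1 ≤ K →
      ∀ (H' : Finset (Finset (Fin n))) (U : ℕ → Finset (Fin n)) (Δ : ℕ → ℕ → ℝ),
        IsPartiteWith r U H' →
        (∀ i < r, ∀ j < r, i ≤ j → (U j).card ≤ (U i).card) →
        (∀ i < r, ∀ v ∈ U i, ∃ e ∈ H', v ∈ e) →
        (r.factorial : ℝ) / (2 * (r : ℝ) ^ (r.choose 2 + r)) * K * (n : ℝ) ^ (r - 1) /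
            Real.log n ^ (r.choose 2) ≤ (H'.card : ℝ) →
        (∀ i < r, ∀ j < r, i < j → 1 ≤ Δ i j ∧
          ∀ vi ∈ U i, ∀ vj ∈ U j, (∃ e ∈ H', vi ∈ e ∧ vj ∈ e) →
            Δ i j / (2 * (r.choose 2 : ℝ) * ((r : ℝ) * Real.log n) ^ (r.choose 2)) ≤
              (codeg H' vi vj : ℝ) ∧
            (codeg H' vi vj : ℝ) ≤ 2 * Δ i j) →
        ∃ j : ℕ, 1 ≤ j ∧ j < r ∧
          K ^ (1 / ((r : ℝ) - 1)) * ((U 0).card : ℝ) ^ (2 - 1 / ((r : ℝ) - 1)) /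
              Real.log n ^ c ≤ ((shadowPairs H' (U 0) (U j)).card : ℝ) := by
    classical
  refine ⟨2 * (r.choose 2 : ℝ) + 1,
    ⌈Real.exp (8 * (r.choose 2 : ℝ) * (r : ℝ) ^ (2 * r.choose 2 + r))⌉₊, by positivity, ?_⟩
  intro n hn K hK H' U Δ hpart hUmono hniso hEcard hΔ
  set R : ℕ := r.choose 2 with hRdef
  set L : ℝ := Real.log n with hLdef
  have hr4 : (4:ℝ) ≤ (r:ℝ) := by exact_mod_cast hr
  have hr0 : (0:ℝ) < (r:ℝ) := by linarith
  have hR6 : 6 ≤ R := by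
    have h1 := Nat.choose_le_choose 2 hr
    have h2 : Nat.choose 4 2 = 6 := by decide
    omega
  have hR6' : (6:ℝ) ≤ (R:ℝ) := by exact_mod_cast hR6
  set M : ℝ := 8 * (R : ℝ) * (r:ℝ) ^ (2 * R + r) with hMdef
  have hrpow1 : (1:ℝ) ≤ (r:ℝ) ^ (2*R+r) := one_le_pow₀ (by linarith)
  have hM1 : 1 ≤ M := by
    rw [hMdef]
    have h1 := mul_le_mul_of_nonneg_left hrpow1 (by linarith : (0:ℝ) ≤ 8 * (R:ℝ))
    linarith
  have hexp : Real.exp M ≤ (n:ℝ) := le_trans (Nat.le_ceil _) (by exact_mod_cast hn)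
  have hn0 : (0:ℝ) < n := lt_of_lt_of_le (Real.exp_pos M) hexp
  have hLM : M ≤ L := (Real.le_log_iff_exp_le hn0).mpr hexp
  have hL1 : 1 ≤ L := le_trans hM1 hLM
  have hL0 : (0:ℝ) < L := by linarith
  set alp : ℝ := (r.factorial : ℝ) / (2 * (r:ℝ) ^ (R + r)) with halpdef
  have halp0 : 0 < alp := by
    rw [halpdef]
    have h1 : (0:ℝ) < (r.factorial : ℝ) := by exact_mod_cast r.factorial_pos
    positivity
  have hK0 : (0:ℝ) < K := by linarith
  have hEpos : (0:ℝ) < (H'.card : ℝ) := by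
    refine lt_of_lt_of_le ?_ hEcard
    have h1 : (0:ℝ) < (n:ℝ) ^ (r-1) := by positivity
    positivity
  have hH'ne : H'.Nonempty := Finset.card_pos.mp (by exact_mod_cast hEpos)
  obtain ⟨e₀, he₀⟩ := hH'ne
  have hU0ne : (U 0).Nonempty := by
    have h1 := (hpart.2 e₀ he₀).2 0 (by omega)
    have h2 : (e₀ ∩ U 0).Nonempty := Finset.card_pos.mp (by omega)
    obtain ⟨x, hx⟩ := h2
    exact ⟨x, (Finset.mem_inter.mp hx).2⟩
  -- degree function
  set deg : Fin n → ℕ := fun u => (H'.filter fun e => u ∈ e).card with hdegdef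
  have hsumdeg : ∑ u ∈ U 0, deg u = H'.card := by
    rw [hdegdef]
    rw [sum_card_filter_comm' (U 0) H' (fun u e => u ∈ e)]
    have h1 : ∀ e ∈ H', ((U 0).filter fun u => u ∈ e).card = 1 := by
      intro e he
      rw [Finset.filter_mem_eq_inter, Finset.inter_comm]
      exact (hpart.2 e he).2 0 (by omega)
    rw [Finset.sum_congr rfl h1]
    simp
  obtain ⟨u, hu, humin⟩ := Finset.exists_min_image (U 0) deg hU0ne
  have hAD : (U 0).card * deg u ≤ H'.card := by
    have h1 := Finset.card_nsmul_le_sum (U 0) deg (deg u) (fun v hv => humin v hv)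
    rw [smul_eq_mul] at h1
    exact le_of_le_of_eq h1 hsumdeg
  have hdeg1 : 1 ≤ deg u := by
    obtain ⟨e, he, hue⟩ := hniso 0 (by omega) u hu
    exact Finset.card_pos.mpr ⟨e, Finset.mem_filter.mpr ⟨he, hue⟩⟩
  -- vertex selector
  set vtx : Finset (Fin n) → ℕ → Fin n := fun e j =>
    if h : (e ∩ U j).Nonempty then (e ∩ U j).min' h else u with hvtxdef
  have hvtx : ∀ e ∈ H', ∀ j < r, e ∩ U j = {vtx e j} := by
    intro e he j hj
    obtain ⟨a, ha⟩ := Finset.card_eq_one.mp ((hpart.2 e he).2 j hj)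
    have hne : (e ∩ U j).Nonempty := by rw [ha]; exact Finset.singleton_nonempty a
    have hva : vtx e j = a := by
      rw [hvtxdef]
      simp only
      rw [dif_pos hne]
      have hmem : (e ∩ U j).min' hne ∈ ({a} : Finset (Fin n)) := by
        rw [← ha]; exact Finset.min'_mem (e ∩ U j) hne
      exact Finset.mem_singleton.mp hmem
    rw [ha, hva]
  set N : ℕ → Finset (Fin n) := fun j => (U j).filter fun v => ∃ e ∈ H', u ∈ e ∧ v ∈ e
    with hNdef
  -- deg u ≤ ∏ d_j(u)
  have h6a : deg u ≤ ∏ j ∈ Finset.Ico 1 r, (N j).card := by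
    rw [← Finset.card_pi]
    apply Finset.card_le_card_of_injOn (fun e (j : ℕ) (_ : j ∈ Finset.Ico 1 r) => vtx e j)
    · intro e he
      rw [Finset.mem_coe, Finset.mem_filter] at he
      rw [Finset.mem_coe, Finset.mem_pi]
      intro j hj
      rw [Finset.mem_Ico] at hj
      have hje : vtx e j ∈ e ∩ U j := by
        rw [hvtx e he.1 j hj.2]; exact Finset.mem_singleton_self _
      rw [hNdef]
      exact Finset.mem_filter.mpr ⟨(Finset.mem_inter.mp hje).2,
        e, he.1, he.2, (Finset.mem_inter.mp hje).1⟩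
    · intro e1 h1 e2 h2 hf
      rw [Finset.mem_coe, Finset.mem_filter] at h1 h2
      rw [edge_decomp' U hpart.1 e1 (hpart.2 e1 h1.1).1 (hpart.2 e1 h1.1).2,
         edge_decomp' U hpart.1 e2 (hpart.2 e2 h2.1).1 (hpart.2 e2 h2.1).2]
      apply Finset.biUnion_congr rfl
      intro j hj
      rw [Finset.mem_range] at hj
      rcases Nat.eq_zero_or_pos j with hj0 | hj1
      · subst hj0
        have ha1 : e1 ∩ U 0 = {u} := by
          have hm1 : u ∈ e1 ∩ U 0 := Finset.mem_inter.mpr ⟨h1.2, hu⟩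
          rw [hvtx e1 h1.1 0 (by omega)] at hm1 ⊢
          rw [Finset.mem_singleton.mp hm1]
        have ha2 : e2 ∩ U 0 = {u} := by
          have hm2 : u ∈ e2 ∩ U 0 := Finset.mem_inter.mpr ⟨h2.2, hu⟩
          rw [hvtx e2 h2.1 0 (by omega)] at hm2 ⊢
          rw [Finset.mem_singleton.mp hm2]
        rw [ha1, ha2]
      · have hveq : vtx e1 j = vtx e2 j :=
          congrFun (congrFun hf j) (Finset.mem_Ico.mpr ⟨hj1, hj⟩)
        rw [hvtx e1 h1.1 j hj, hvtx e2 h2.1 j hj, hveq]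
  -- lambda
  set lam : ℝ := 2 * (R:ℝ) * ((r:ℝ) * L) ^ R with hlamdef
  have hlam0 : 0 < lam := by
    have h1 : (0:ℝ) < ((r:ℝ) * L) ^ R := by positivity
    rw [hlamdef]
    exact mul_pos (by linarith : (0:ℝ) < 2 * (R:ℝ)) h1
  -- codegree bound per part
  have h6b : ∀ j ∈ Finset.Ico 1 r, Δ 0 j * ((N j).card : ℝ) ≤ lam * (deg u : ℝ) := by
    intro j hj
    rw [Finset.mem_Ico] at hj
    have hid : ∑ v ∈ N j, codeg H' u v = deg u := by
      have hUj : ∑ v ∈ U j, codeg H' u v = deg u := by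
        unfold codeg
        rw [sum_card_filter_comm' (U j) H' (fun v e => u ∈ e ∧ v ∈ e), hdegdef]
        simp only
        rw [Finset.card_filter]
        apply Finset.sum_congr rfl
        intro e he
        by_cases hue : u ∈ e
        · rw [if_pos hue]
          have heq : (U j).filter (fun v => u ∈ e ∧ v ∈ e) = (U j).filter (fun v => v ∈ e) := by
            apply Finset.filter_congr; intro v _; simp [hue]
          rw [heq, Finset.filter_mem_eq_inter, Finset.inter_comm]
          exact (hpart.2 e he).2 j hj.2
        · rw [if_neg hue, Finset.filter_false_of_mem (fun v _ => by simp [hue]),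
            Finset.card_empty]
      rw [← hUj]
      apply Finset.sum_subset (Finset.filter_subset _ _)
      intro v hv hnv
      unfold codeg
      rw [Finset.card_eq_zero, Finset.filter_eq_empty_iff]
      intro e he hc
      exact hnv (Finset.mem_filter.mpr ⟨hv, e, he, hc⟩)
    have hlow : ∀ v ∈ N j, Δ 0 j / (2 * (R:ℝ) * ((r:ℝ) * L) ^ R) ≤ (codeg H' u v : ℝ) := by
      intro v hv
      rw [hNdef, Finset.mem_filter] at hv
      exact (((hΔ 0 (by omega) j hj.2 (by omega)).2) u hu v hv.1 hv.2).1
    have hsmul := Finset.card_nsmul_le_sum (N j)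
      (fun v => (codeg H' u v : ℝ)) _ hlow
    rw [nsmul_eq_mul] at hsmul
    have hsum : ∑ v ∈ N j, (codeg H' u v : ℝ) = (deg u : ℝ) := by
      rw [← Nat.cast_sum, hid]
    rw [hsum] at hsmul
    have hsmul' : ((N j).card : ℝ) * (Δ 0 j / lam) ≤ (deg u : ℝ) := hsmul
    have h2' := mul_le_mul_of_nonneg_right hsmul' hlam0.le
    calc Δ 0 j * ((N j).card : ℝ) = ((N j).card : ℝ) * (Δ 0 j / lam) * lam := by
          rw [mul_assoc, div_mul_cancel₀ _ hlam0.ne']; ring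
        _ ≤ (deg u : ℝ) * lam := h2'
        _ = lam * (deg u : ℝ) := by ring
  -- pick the minimizing part
  obtain ⟨j', hj'mem, hj'min⟩ := Finset.exists_min_image (Finset.Ico 1 r) (fun j => Δ 0 j)
    ⟨1, Finset.mem_Ico.mpr ⟨le_refl 1, by omega⟩⟩
  have hj'1 : 1 ≤ j' := (Finset.mem_Ico.mp hj'mem).1
  have hj'r : j' < r := (Finset.mem_Ico.mp hj'mem).2
  set m : ℝ := Δ 0 j' with hmdef
  have hΔ1 : ∀ j ∈ Finset.Ico 1 r, 1 ≤ Δ 0 j := by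
    intro j hj
    rw [Finset.mem_Ico] at hj
    exact (hΔ 0 (by omega) j hj.2 (by omega)).1
  have hm1 : 1 ≤ m := hΔ1 j' hj'mem
  set D : ℝ := (deg u : ℝ) with hDdef
  have hD1 : (1:ℝ) ≤ D := by rw [hDdef]; exact_mod_cast hdeg1
  have hD0 : (0:ℝ) < D := by linarith
  -- product bounds
  have hIcocard : (Finset.Ico 1 r).card = r - 1 := by rw [Nat.card_Ico]
  have hprodm : m ^ (r-1) ≤ ∏ j ∈ Finset.Ico 1 r, Δ 0 j := by
    calc m ^ (r-1) = ∏ _j ∈ Finset.Ico 1 r, m := by rw [Finset.prod_const, hIcocard]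
      _ ≤ _ := Finset.prod_le_prod (fun j _ => by linarith) (fun j hj => hj'min j hj)
  have hPP : (∏ j ∈ Finset.Ico 1 r, Δ 0 j) * (∏ j ∈ Finset.Ico 1 r, ((N j).card:ℝ))
      ≤ (lam * D)^(r-1) := by
    rw [← Finset.prod_mul_distrib]
    calc ∏ j ∈ Finset.Ico 1 r, (Δ 0 j * ((N j).card : ℝ))
        ≤ ∏ _j ∈ Finset.Ico 1 r, (lam * D) :=
          Finset.prod_le_prod
            (fun j hj => mul_nonneg (by linarith [hΔ1 j hj]) (Nat.cast_nonneg _))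
            (fun j hj => h6b j hj)
      _ = (lam * D)^(r-1) := by rw [Finset.prod_const, hIcocard]
  have hDprod : D ≤ ∏ j ∈ Finset.Ico 1 r, ((N j).card : ℝ) := by
    rw [hDdef, ← Nat.cast_prod]
    exact_mod_cast h6a
  have hPdelta0 : 0 ≤ ∏ j ∈ Finset.Ico 1 r, Δ 0 j :=
    Finset.prod_nonneg fun j hj => by linarith [hΔ1 j hj]
  have hchain : (∏ j ∈ Finset.Ico 1 r, Δ 0 j) * D ≤ (lam ^ (r-1) * D ^ (r-2)) * D := by
    calc (∏ j ∈ Finset.Ico 1 r, Δ 0 j) * D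
        ≤ (∏ j ∈ Finset.Ico 1 r, Δ 0 j) * (∏ j ∈ Finset.Ico 1 r, ((N j).card:ℝ)) :=
          mul_le_mul_of_nonneg_left hDprod hPdelta0
      _ ≤ (lam * D)^(r-1) := hPP
      _ = lam^(r-1) * D^(r-1) := mul_pow _ _ _
      _ = (lam^(r-1) * D^(r-2)) * D := by
          rw [show r-1 = (r-2)+1 from by omega, pow_succ]; ring
  have h1nat : m^(r-1) ≤ lam^(r-1) * D^(r-2) :=
    hprodm.trans (le_of_mul_le_mul_right hchain hD0)
  -- shadow counting
  have hshadow : (H'.card : ℝ) ≤ ((shadowPairs H' (U 0) (U j')).card : ℝ) * (2 * m) := by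
    have hcnt : ∑ p ∈ shadowPairs H' (U 0) (U j'), codeg H' p.1 p.2 = H'.card := by
      have hsub : shadowPairs H' (U 0) (U j') ⊆ (U 0) ×ˢ (U j') := Finset.filter_subset _ _
      have hzero : ∀ p ∈ (U 0) ×ˢ (U j'), p ∉ shadowPairs H' (U 0) (U j') →
          codeg H' p.1 p.2 = 0 := by
        intro p hp hnp
        unfold codeg
        rw [Finset.card_eq_zero, Finset.filter_eq_empty_iff]
        intro e he hc
        exact hnp (Finset.mem_filter.mpr ⟨hp, e, he, hc⟩)
      rw [Finset.sum_subset hsub hzero]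
      unfold codeg
      rw [sum_card_filter_comm' ((U 0) ×ˢ (U j')) H' (fun p e => p.1 ∈ e ∧ p.2 ∈ e)]
      have h1 : ∀ e ∈ H',
          (((U 0) ×ˢ (U j')).filter fun p => p.1 ∈ e ∧ p.2 ∈ e).card = 1 := by
        intro e he
        have heq : (((U 0) ×ˢ (U j')).filter fun p => p.1 ∈ e ∧ p.2 ∈ e)
            = ((U 0).filter fun x => x ∈ e) ×ˢ ((U j').filter fun x => x ∈ e) := by
          ext ⟨a,b⟩
          simp only [Finset.mem_filter, Finset.mem_product]
          tauto
        rw [heq, Finset.card_product, Finset.filter_mem_eq_inter, Finset.filter_mem_eq_inter,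
          Finset.inter_comm (U 0) e, Finset.inter_comm (U j') e,
          (hpart.2 e he).2 0 (by omega), (hpart.2 e he).2 j' hj'r]
      rw [Finset.sum_congr rfl h1]
      simp
    have hub : ∀ p ∈ shadowPairs H' (U 0) (U j'), (codeg H' p.1 p.2 : ℝ) ≤ 2 * m := by
      intro p hp
      rw [shadowPairs, Finset.mem_filter, Finset.mem_product] at hp
      exact ((hΔ 0 (by omega) j' hj'r (by omega)).2 p.1 hp.1.1 p.2 hp.1.2 hp.2).2
    have hsum := Finset.sum_le_card_nsmul (shadowPairs H' (U 0) (U j'))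
      (fun p => (codeg H' p.1 p.2 : ℝ)) (2*m) hub
    rw [nsmul_eq_mul] at hsum
    calc (H'.card : ℝ) = ∑ p ∈ shadowPairs H' (U 0) (U j'), (codeg H' p.1 p.2 : ℝ) := by
          rw [← Nat.cast_sum, hcnt]
      _ ≤ ((shadowPairs H' (U 0) (U j')).card : ℝ) * (2 * m) := hsum
  -- final application
  refine ⟨j', hj'1, hj'r, ?_⟩
  set A : ℝ := ((U 0).card : ℝ) with hAdef
  have hA1 : (1:ℝ) ≤ A := by
    rw [hAdef]; exact_mod_cast Finset.card_pos.mpr hU0ne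
  have hAn : A ≤ (n:ℝ) := by
    rw [hAdef]
    have := Finset.card_le_univ (U 0)
    calc ((U 0).card : ℝ) ≤ (Finset.univ.card : ℝ) := by exact_mod_cast this
      _ = (n:ℝ) := by simp
  have hscast : ((r:ℝ) - 1) = ((r - 1 : ℕ) : ℝ) := by
    rw [Nat.cast_sub (by omega)]; simp
  have hs1cast : ((r:ℝ) - 1) - 1 = ((r - 2 : ℕ) : ℝ) := by
    rw [Nat.cast_sub (by omega)]; push_cast; ring
  have hs3 : (3:ℝ) ≤ (r:ℝ) - 1 := by linarith
  have hE2 : A * D ≤ (H'.card : ℝ) := by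
    rw [hAdef, hDdef, ← Nat.cast_mul]
    exact_mod_cast hAD
  -- hypothesis h3 in rpow form
  have h3' : alp * K * A ^ ((r:ℝ) - 1) / L ^ ((R:ℕ):ℝ) ≤ (H'.card : ℝ) := by
    rw [hscast, Real.rpow_natCast, Real.rpow_natCast]
    refine le_trans ?_ hEcard
    have hA0' : (0:ℝ) ≤ A := by linarith
    gcongr
  -- h1 in rpow form
  have h1' : m ^ ((r:ℝ) - 1) ≤ lam ^ ((r:ℝ) - 1) * D ^ (((r:ℝ) - 1) - 1) := by
    rw [hs1cast, hscast, Real.rpow_natCast, Real.rpow_natCast, Real.rpow_natCast]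
    exact h1nat
  -- numeric inequality
  have hnum : 2 * lam * L ^ (((R:ℕ):ℝ) / ((r:ℝ) - 1)) ≤
      alp ^ (1 / ((r:ℝ) - 1)) * L ^ (2 * (R:ℝ) + 1) := by
    have hs0 : (0:ℝ) < (r:ℝ) - 1 := by linarith
    have hdiv : ((R:ℕ):ℝ) / ((r:ℝ) - 1) ≤ ((R:ℕ):ℝ) := by
      apply div_le_self (by positivity) (by linarith)
    have hLr1 : L ^ (((R:ℕ):ℝ) / ((r:ℝ) - 1)) ≤ L ^ ((R:ℕ):ℝ) :=
      Real.rpow_le_rpow_of_exponent_le hL1 hdiv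
    have hLR : L ^ ((R:ℕ):ℝ) = L ^ R := Real.rpow_natCast L R
    have halp1 : alp ≤ 1 := by
      rw [halpdef, div_le_one (by positivity)]
      have hf : (r.factorial : ℝ) ≤ (r:ℝ) ^ r := by
        exact_mod_cast Nat.factorial_le_pow r
      have hp : (r:ℝ) ^ r ≤ (r:ℝ) ^ (R + r) := by
        apply pow_le_pow_right₀ (by linarith) (by omega)
      linarith [pow_pos hr0 (R + r)]
    have halppow : alp ≤ alp ^ (1 / ((r:ℝ) - 1)) := by
      have := Real.rpow_le_rpow_of_exponent_ge halp0 halp1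
        (by rw [div_le_one hs0]; linarith : 1 / ((r:ℝ) - 1) ≤ 1)
      rwa [Real.rpow_one] at this
    -- key scalar bound : 4 * R * r^R ≤ alp * L
    have hscalar : 4 * (R:ℝ) * (r:ℝ) ^ R ≤ alp * L := by
      have h1 : alp * M ≤ alp * L := mul_le_mul_of_nonneg_left hLM halp0.le
      have h2 : 4 * (R:ℝ) * (r:ℝ) ^ R ≤ alp * M := by
        rw [halpdef, hMdef]
        have hrpow : (r:ℝ) ^ (2*R+r) = (r:ℝ)^R * (r:ℝ)^(R+r) := by
          rw [← pow_add]; ring_nf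
        have hfact1 : (1:ℝ) ≤ (r.factorial : ℝ) := by exact_mod_cast r.factorial_pos
        have hpRr : (0:ℝ) < (r:ℝ) ^ (R+r) := by positivity
        rw [hrpow]
        rw [div_mul_eq_mul_div, le_div_iff₀ (by positivity)]
        have base : (0:ℝ) ≤ 8 * (R:ℝ) * ((r:ℝ)^R * (r:ℝ)^(R+r)) := by positivity
        calc 4 * (R:ℝ) * (r:ℝ)^R * (2 * (r:ℝ) ^ (R + r))
            = 1 * (8 * (R:ℝ) * ((r:ℝ)^R * (r:ℝ)^(R+r))) := by ring
          _ ≤ (r.factorial : ℝ) * (8 * (R:ℝ) * ((r:ℝ)^R * (r:ℝ)^(R+r))) :=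
              mul_le_mul_of_nonneg_right hfact1 base
          _ = (r.factorial : ℝ) * (8 * ↑R * ((r:ℝ)^R * (r:ℝ)^(R+r))) := by ring
      linarith
    -- assemble
    have hLRpos : (0:ℝ) < L ^ R := by positivity
    have hlam_eq : lam = 2 * (R:ℝ) * (r:ℝ)^R * L^R := by
      rw [hlamdef, mul_pow]; ring
    have hstep1 : 2 * lam * L ^ (((R:ℕ):ℝ) / ((r:ℝ) - 1)) ≤
        4 * (R:ℝ) * (r:ℝ)^R * L^R * L^R := by
      rw [hlam_eq]
      have := mul_le_mul_of_nonneg_left hLr1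
        (by positivity : (0:ℝ) ≤ 2 * (2 * (R:ℝ) * (r:ℝ)^R * L^R))
      rw [hLR] at this
      calc 2 * (2 * (R:ℝ) * (r:ℝ)^R * L^R) * L ^ (((R:ℕ):ℝ) / ((r:ℝ) - 1))
          ≤ 2 * (2 * (R:ℝ) * (r:ℝ)^R * L^R) * L^R := this
        _ = 4 * (R:ℝ) * (r:ℝ)^R * L^R * L^R := by ring
    have hstep2 : 4 * (R:ℝ) * (r:ℝ)^R * L^R * L^R ≤
        alp ^ (1 / ((r:ℝ) - 1)) * L ^ (2 * (R:ℝ) + 1) := by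
      have hLc : L ^ (2 * (R:ℝ) + 1) = L^R * L^R * L := by
        have : (2 * (R:ℝ) + 1) = ((R:ℕ):ℝ) + ((R:ℕ):ℝ) + 1 := by push_cast; ring
        rw [this, Real.rpow_add hL0, Real.rpow_add hL0, Real.rpow_one, hLR]
      rw [hLc]
      have hfinal : 4 * (R:ℝ) * (r:ℝ)^R ≤ alp ^ (1 / ((r:ℝ) - 1)) * L := by
        calc 4 * (R:ℝ) * (r:ℝ)^R ≤ alp * L := hscalar
          _ ≤ alp ^ (1 / ((r:ℝ) - 1)) * L := mul_le_mul_of_nonneg_right halppow hL0.le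
      calc 4 * (R:ℝ) * (r:ℝ)^R * L^R * L^R = (4 * (R:ℝ) * (r:ℝ)^R) * (L^R * L^R) := by ring
        _ ≤ (alp ^ (1 / ((r:ℝ) - 1)) * L) * (L^R * L^R) := by
            apply mul_le_mul_of_nonneg_right hfinal (by positivity)
        _ = alp ^ (1 / ((r:ℝ) - 1)) * (L^R * L^R * L) := by ring
    linarith
  have hgoal := core_ineq ((r:ℝ) - 1) ((R:ℕ):ℝ) (2 * (R:ℝ) + 1) m lam D A
    (H'.card : ℝ) K L ((shadowPairs H' (U 0) (U j')).card : ℝ) alp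
    hs3 hm1 hD1 hA1 hK halp0 hL1 hlam0 h1' hE2 h3' hshadow hnum
  exact hgoal
end

section
/- Let r ≥ 3 and ℓ ≥ 2 be integers, let n ∈ ℕ, and let H' be an r-partite r-graph on at most n vertices with parts U_1, …, U_r. Suppose D > 0 is a real with D ≥ 8·ℓ·r·n^{r−3} such that d_{H'}(x,y) ≥ D for every pair (x,y) ∈ ∂_{U_1,U_2}(H'). Then for every sequence of 2ℓ distinct vertices x_1, x_2, …, x_{2ℓ} with (x_i, x_{i+1}) ∈ ∂_{U_1,U_2}(H') for all i (indices taken cyclically modulo 2ℓ, and alternating between U_1 and U_2), there are at least (D/2)^{2ℓ} ways to choose edges f_1, …, f_{2ℓ} of H' with {x_i, x_{i+1}} ⊆ f_i for each i, such that the sets f_i ∖ {x_i, x_{i+1}} are pairwise disjoint and disjoint from {x_1, …, x_{2ℓ}}; in particular each such choice of f_1, …, f_{2ℓ} forms a copy of the linear cycle C_{2ℓ}^{(r)} in H'. -/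
open MeasureTheory Filter

/-- A choice of edges `f 0, …, f (2l-1)` of `H'` extending the cyclic vertex sequence
`x 0, x 1, …, x (2l-1)`: edge `f i` contains `x i` and `x (i+1)` (cyclically), the leftover
parts `f i \ {x i, x (i+1)}` are pairwise disjoint, and they avoid all the vertices
`x 0, …, x (2l-1)`. -/
def CycleExtension (n l : ℕ) (H' : Finset (Finset (Fin n))) (x : ℕ → Fin n)
    (f : Fin (2 * l) → Finset (Fin n)) : Prop :=
  (∀ i : Fin (2 * l), f i ∈ H' ∧ x i.val ∈ f i ∧ x ((i.val + 1) % (2 * l)) ∈ f i) ∧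
  (∀ i j : Fin (2 * l), i ≠ j →
    Disjoint (f i \ {x i.val, x ((i.val + 1) % (2 * l))})
             (f j \ {x j.val, x ((j.val + 1) % (2 * l))})) ∧
  (∀ i : Fin (2 * l),
    Disjoint (f i \ {x i.val, x ((i.val + 1) % (2 * l))}) ((Finset.range (2 * l)).image x))

lemma succMod_cases {N a : ℕ} (ha : a < N) : ((a+1) % N = a+1 ∧ a+1 < N) ∨ ((a+1) % N = 0 ∧ a+1 = N) := by
  rcases lt_or_eq_of_le (Nat.succ_le_of_lt ha) with h | h
  · exact Or.inl ⟨Nat.mod_eq_of_lt h, h⟩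
  · exact Or.inr ⟨by rw [show a+1 = N from h, Nat.mod_self], h⟩

lemma succMod_ne {N a : ℕ} (hN : 2 ≤ N) (ha : a < N) : (a+1) % N ≠ a := by
  rcases succMod_cases ha with ⟨h1, h2⟩ | ⟨h1, h2⟩ <;> omega

lemma succMod_lt {N a : ℕ} (hN : 0 < N) : (a+1) % N < N := Nat.mod_lt _ hN

lemma succMod_inj {N a b : ℕ} (ha : a < N) (hb : b < N) (h : (a+1) % N = (b+1) % N) : a = b := by
  rcases succMod_cases ha with ⟨h1, h2⟩ | ⟨h1, h2⟩ <;> rcases succMod_cases hb with ⟨h3, h4⟩ | ⟨h3, h4⟩ <;> omega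

lemma succSuccMod_ne {N a : ℕ} (hN : 3 ≤ N) (ha : a < N) : ((a+1) % N + 1) % N ≠ a := by
  rcases succMod_cases ha with ⟨h1, h2⟩ | ⟨h1, h2⟩
  · rw [h1]; rcases succMod_cases h2 with ⟨h3, h4⟩ | ⟨h3, h4⟩ <;> omega
  · rw [h1]; rw [Nat.mod_eq_of_lt (by omega : 0 + 1 < N)]; omega

lemma card_le_of_fiber {γ : Type*} [DecidableEq γ] (S T : Finset γ) (π : γ → γ) (c : ℝ)
    (hπ : ∀ g ∈ T, π g ∈ S)
    (hfib : ∀ f ∈ S, c ≤ ((T.filter fun g => π g = f).card : ℝ)) :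
    c * S.card ≤ (T.card : ℝ) := by
  classical
  rw [Finset.card_eq_sum_card_fiberwise hπ]
  push_cast
  calc c * S.card = ∑ _f ∈ S, c := by rw [Finset.sum_const, nsmul_eq_mul]; ring
  _ ≤ ∑ f ∈ S, ((T.filter fun g => π g = f).card : ℝ) := Finset.sum_le_sum hfib

lemma count_through {n r : ℕ} (H : Finset (Finset (Fin n))) (hH : ∀ e ∈ H, e.card = r)
    (a b v : Fin n) (hab : a ≠ b) (hav : a ≠ v) (hbv : b ≠ v) :
    ((H.filter fun e => a ∈ e ∧ b ∈ e ∧ v ∈ e).card : ℝ) ≤ (n : ℝ) ^ (r - 3) := by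
  classical
  have h1 : (H.filter fun e => a ∈ e ∧ b ∈ e ∧ v ∈ e).card ≤ n.choose (r - 3) := by
    have := Finset.card_le_card_of_injOn (s := H.filter fun e => a ∈ e ∧ b ∈ e ∧ v ∈ e)
      (t := Finset.powersetCard (r-3) (Finset.univ : Finset (Fin n)))
      (fun e => e \ {a, b, v}) ?_ ?_
    · simpa [Finset.card_powersetCard] using this
    · intro e he
      simp only [Finset.coe_filter, Set.mem_setOf_eq] at he
      obtain ⟨heH, ha, hb, hv⟩ := he
      rw [Finset.mem_coe, Finset.mem_powersetCard]
      refine ⟨Finset.subset_univ _, ?_⟩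
      have hsub : ({a, b, v} : Finset (Fin n)) ⊆ e := by
        intro z hz; simp at hz; rcases hz with rfl | rfl | rfl <;> assumption
      rw [Finset.card_sdiff_of_subset hsub, hH e heH]
      have : ({a, b, v} : Finset (Fin n)).card = 3 := by
        rw [Finset.card_insert_of_notMem (by simp [hab, hav]),
          Finset.card_insert_of_notMem (by simp [hbv]), Finset.card_singleton]
      rw [this]
    · intro e he e' he' hee
      simp only [Finset.coe_filter, Set.mem_setOf_eq] at he he'
      have hsub : ({a, b, v} : Finset (Fin n)) ⊆ e := by
        intro z hz; simp at hz; rcases hz with rfl | rfl | rfl <;> tauto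
      have hsub' : ({a, b, v} : Finset (Fin n)) ⊆ e' := by
        intro z hz; simp at hz; rcases hz with rfl | rfl | rfl <;> tauto
      rw [← Finset.sdiff_union_of_subset hsub, ← Finset.sdiff_union_of_subset hsub',
        show e \ {a,b,v} = e' \ {a,b,v} from hee]
  calc ((H.filter fun e => a ∈ e ∧ b ∈ e ∧ v ∈ e).card : ℝ) ≤ (n.choose (r-3) : ℝ) := by
        exact_mod_cast h1
  _ ≤ (n : ℝ) ^ (r - 3) := by exact_mod_cast Nat.choose_le_pow n (r-3)

lemma part1 (r l : ℕ) (hr : 3 ≤ r) (hl : 2 ≤ l) (n : ℕ)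
    (H' : Finset (Finset (Fin n))) (U : ℕ → Finset (Fin n))
    (hpart : IsPartiteWith r U H')
    (D : ℝ) (hD : 8 * (l : ℝ) * (r : ℝ) * (n : ℝ) ^ (r - 3) ≤ D)
    (hcodeg : ∀ xy ∈ shadowPairs H' (U 0) (U 1), D ≤ (codeg H' xy.1 xy.2 : ℝ))
    (x : ℕ → Fin n)
    (hdist : ∀ i < 2 * l, ∀ j < 2 * l, x i = x j → i = j)
    (hshadow : ∀ i < 2 * l,
      (i % 2 = 0 → (x i, x ((i + 1) % (2 * l))) ∈ shadowPairs H' (U 0) (U 1)) ∧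
      (i % 2 = 1 → (x ((i + 1) % (2 * l)), x i) ∈ shadowPairs H' (U 0) (U 1))) :
    (D / 2) ^ (2 * l) ≤
      (Set.ncard {f : Fin (2 * l) → Finset (Fin n) | CycleExtension n l H' x f} : ℝ) := by
  classical
  have hN0 : 0 < 2 * l := by omega
  have hn : 0 < n := (x 0).pos
  have hl' : (2 : ℝ) ≤ (l : ℝ) := by exact_mod_cast hl
  have hr' : (3 : ℝ) ≤ (r : ℝ) := by exact_mod_cast hr
  have hp1 : (1 : ℝ) ≤ (n : ℝ) ^ (r - 3) := by
    apply one_le_pow₀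
    exact_mod_cast hn
  have hp0 : (0 : ℝ) ≤ (n : ℝ) ^ (r - 3) := by positivity
  have hDpos : (0 : ℝ) < D := by
    have hl0 : (0:ℝ) < l := by linarith
    have hr0 : (0:ℝ) < r := by linarith
    have hp : (0:ℝ) < (n : ℝ) ^ (r - 3) := by linarith
    calc (0:ℝ) < 8 * l * r * (n:ℝ)^(r-3) := by positivity
    _ ≤ D := hD
  -- partial-extension predicate
  set P : ℕ → (Fin (2 * l) → Finset (Fin n)) → Prop := fun m f =>
    (∀ i : Fin (2 * l), i.val < m →
        f i ∈ H' ∧ x i.val ∈ f i ∧ x ((i.val + 1) % (2 * l)) ∈ f i) ∧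
    (∀ i j : Fin (2 * l), i.val < m → j.val < m → i ≠ j →
      Disjoint (f i \ {x i.val, x ((i.val + 1) % (2 * l))})
               (f j \ {x j.val, x ((j.val + 1) % (2 * l))})) ∧
    (∀ i : Fin (2 * l), i.val < m →
      Disjoint (f i \ {x i.val, x ((i.val + 1) % (2 * l))}) ((Finset.range (2 * l)).image x)) ∧
    (∀ i : Fin (2 * l), ¬ i.val < m → f i = ∅) with hP
  set S : ℕ → Finset (Fin (2 * l) → Finset (Fin n)) := fun m =>
    Finset.univ.filter (P m) with hS
  have memS : ∀ m g, g ∈ S m ↔ P m g := by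
    intro m g; simp [hS]
  -- base case
  have base : (S 0).card = 1 := by
    have : S 0 = {fun _ => ∅} := by
      ext g
      rw [memS, Finset.mem_singleton]
      constructor
      · rintro ⟨-, -, -, h4⟩
        funext i
        exact h4 i (by omega)
      · rintro rfl
        exact ⟨fun i hi => absurd hi (by omega), fun i j hi => absurd hi (by omega),
          fun i hi => absurd hi (by omega), fun i _ => rfl⟩
    rw [this, Finset.card_singleton]
  -- step
  have step : ∀ m, m < 2 * l → D / 2 * ((S m).card : ℝ) ≤ ((S (m+1)).card : ℝ) := by
    intro m hm
    set m' : Fin (2 * l) := ⟨m, hm⟩ with hm'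
    apply card_le_of_fiber (S m) (S (m+1)) (fun g => Function.update g m' ∅) (D/2)
    · -- truncation maps S(m+1) into S m
      intro g hg
      rw [memS] at hg ⊢
      obtain ⟨g1, g2, g3, g4⟩ := hg
      have hne : ∀ i : Fin (2*l), i.val < m → i ≠ m' := by
        intro i hi h; rw [h] at hi; exact lt_irrefl m hi
      refine ⟨?_, ?_, ?_, ?_⟩
      · intro i hi
        rw [Function.update_of_ne (hne i hi)]
        exact g1 i (by omega)
      · intro i j hi hj hij
        rw [Function.update_of_ne (hne i hi), Function.update_of_ne (hne j hj)]
        exact g2 i j (by omega) (by omega) hij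
      · intro i hi
        rw [Function.update_of_ne (hne i hi)]
        exact g3 i (by omega)
      · intro i hi
        by_cases h : i = m'
        · rw [h, Function.update_self]
        · rw [Function.update_of_ne h]
          apply g4
          have : i.val ≠ m := by
            intro hv; exact h (Fin.ext hv)
          omega
    · -- fiber lower bound
      intro f hf
      rw [memS] at hf
      obtain ⟨f1, f2, f3, f4⟩ := hf
      set a : Fin n := x m with ha
      set b : Fin n := x ((m + 1) % (2 * l)) with hb
      have hab : a ≠ b := by
        intro h
        exact succMod_ne (by omega) hm (hdist _ (succMod_lt hN0) m hm h.symm)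
      set C : Finset (Finset (Fin n)) := H'.filter fun e => a ∈ e ∧ b ∈ e with hC
      have hDC : D ≤ (C.card : ℝ) := by
        rcases Nat.mod_two_eq_zero_or_one m with h0 | h1
        · have hsh := (hshadow m hm).1 h0
          have := hcodeg _ hsh
          simpa [codeg, hC, ha, hb] using this
        · have hsh := (hshadow m hm).2 h1
          have h2 : D ≤ ((H'.filter fun e => b ∈ e ∧ a ∈ e).card : ℝ) := by
            simpa [codeg, ha, hb] using hcodeg _ hsh
          have hcongr : (H'.filter fun e => b ∈ e ∧ a ∈ e)
              = (H'.filter fun e => a ∈ e ∧ b ∈ e) :=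
            Finset.filter_congr (fun e _ => and_comm)
          rw [hcongr] at h2
          exact h2
      set B : Finset (Fin n) := ((Finset.range (2 * l)).image x) ∪
        Finset.univ.biUnion (fun i : Fin (2 * l) =>
          if i.val < m then f i \ {x i.val, x ((i.val + 1) % (2 * l))} else ∅) with hB
      have hBcard : (B.card : ℝ) ≤ 2 * l + 2 * l * r := by
        have h1 : B.card ≤ 2 * l + 2 * l * r := by
          calc B.card ≤ ((Finset.range (2 * l)).image x).card +
              (Finset.univ.biUnion (fun i : Fin (2 * l) =>
                if i.val < m then f i \ {x i.val, x ((i.val + 1) % (2 * l))} else ∅)).card :=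
                Finset.card_union_le _ _
          _ ≤ 2 * l + 2 * l * r := by
            have e1 : ((Finset.range (2 * l)).image x).card ≤ 2 * l := by
              calc _ ≤ (Finset.range (2*l)).card := Finset.card_image_le
              _ = 2 * l := Finset.card_range _
            have e2 : (Finset.univ.biUnion (fun i : Fin (2 * l) =>
                if i.val < m then f i \ {x i.val, x ((i.val + 1) % (2 * l))} else ∅)).card
                ≤ 2 * l * r := by
              calc _ ≤ ∑ i : Fin (2*l), (if i.val < m then
                    f i \ {x i.val, x ((i.val + 1) % (2 * l))} else ∅).card :=
                  Finset.card_biUnion_le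
              _ ≤ Finset.univ.card • r := by
                  apply Finset.sum_le_card_nsmul
                  intro i _
                  by_cases h : i.val < m
                  · rw [if_pos h]
                    calc (f i \ _).card ≤ (f i).card := Finset.card_le_card (Finset.sdiff_subset)
                    _ = r := (hpart.2 _ (f1 i h).1).1
                  · rw [if_neg h]; simp
              _ = 2 * l * r := by simp [Finset.card_univ, smul_eq_mul]
            omega
        exact_mod_cast h1
      set G : Finset (Finset (Fin n)) := C.filter fun e => Disjoint (e \ {a, b}) B with hG
      have hBad : ((C.filter fun e => ¬ Disjoint (e \ {a, b}) B).card : ℝ)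
          ≤ (2 * l + 2 * l * r) * (n : ℝ) ^ (r - 3) := by
        have hsub : (C.filter fun e => ¬ Disjoint (e \ {a, b}) B) ⊆
            (B \ {a, b}).biUnion (fun v => H'.filter fun e => a ∈ e ∧ b ∈ e ∧ v ∈ e) := by
          intro e he
          simp only [hC, Finset.mem_filter] at he
          obtain ⟨⟨heH, hae, hbe⟩, hnd⟩ := he
          obtain ⟨v, hv1, hv2⟩ := Finset.not_disjoint_iff.mp hnd
          rw [Finset.mem_sdiff] at hv1
          rw [Finset.mem_biUnion]
          refine ⟨v, ?_, ?_⟩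
          · rw [Finset.mem_sdiff]; exact ⟨hv2, hv1.2⟩
          · rw [Finset.mem_filter]; exact ⟨heH, hae, hbe, hv1.1⟩
        calc ((C.filter fun e => ¬ Disjoint (e \ {a, b}) B).card : ℝ)
            ≤ (((B \ {a, b}).biUnion (fun v =>
                H'.filter fun e => a ∈ e ∧ b ∈ e ∧ v ∈ e)).card : ℝ) := by
              exact_mod_cast Finset.card_le_card hsub
        _ ≤ (∑ v ∈ B \ {a, b}, (H'.filter fun e => a ∈ e ∧ b ∈ e ∧ v ∈ e).card : ℕ) := by
              exact_mod_cast Finset.card_biUnion_le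
        _ = ∑ v ∈ B \ {a, b}, ((H'.filter fun e => a ∈ e ∧ b ∈ e ∧ v ∈ e).card : ℝ) := by
              push_cast; rfl
        _ ≤ ∑ _v ∈ B \ {a, b}, (n : ℝ) ^ (r - 3) := by
              apply Finset.sum_le_sum
              intro v hv
              rw [Finset.mem_sdiff, Finset.mem_insert, Finset.mem_singleton] at hv
              push_neg at hv
              exact count_through H' (fun e he => (hpart.2 e he).1) a b v hab
                (Ne.symm hv.2.1) (Ne.symm hv.2.2)
        _ = ((B \ {a, b}).card : ℝ) * (n : ℝ) ^ (r - 3) := by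
              rw [Finset.sum_const, nsmul_eq_mul]
        _ ≤ (2 * l + 2 * l * r) * (n : ℝ) ^ (r - 3) := by
              apply mul_le_mul_of_nonneg_right _ hp0
              calc ((B \ {a, b}).card : ℝ) ≤ (B.card : ℝ) := by
                    exact_mod_cast Finset.card_le_card (Finset.sdiff_subset)
              _ ≤ _ := hBcard
      have hBadD : ((2 : ℝ) * l + 2 * l * r) * (n : ℝ) ^ (r - 3) ≤ D / 2 := by
        have h1 : (2 * (l:ℝ) + 2 * l * r) ≤ 4 * l * r := by nlinarith
        have h2 : (2 * (l:ℝ) + 2 * l * r) * (n : ℝ) ^ (r - 3) ≤ 4 * l * r * (n:ℝ)^(r-3) :=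
          mul_le_mul_of_nonneg_right h1 hp0
        linarith
      have hGcard : D / 2 ≤ (G.card : ℝ) := by
        have hsplit := Finset.card_filter_add_card_filter_not
          (s := C) (fun e => Disjoint (e \ {a, b}) B)
        have : (G.card : ℝ) + ((C.filter fun e => ¬ Disjoint (e \ {a, b}) B).card : ℝ)
            = (C.card : ℝ) := by exact_mod_cast hsplit
        linarith
      -- injection from G into the fiber
      have hmap : ∀ e ∈ G, Function.update f m' e ∈
          (S (m+1)).filter fun g => Function.update g m' ∅ = f := by
        intro e he
        simp only [hG, hC, Finset.mem_filter] at he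
        obtain ⟨⟨heH, hae, hbe⟩, hdisj⟩ := he
        have hfm : f m' = ∅ := f4 m' (by simp [hm'])
        rw [Finset.mem_filter]
        constructor
        · rw [memS]
          have hxsub : ((Finset.range (2*l)).image x) ⊆ B := Finset.subset_union_left
          have hLsub : ∀ j : Fin (2*l), j.val < m →
              f j \ {x j.val, x ((j.val + 1) % (2 * l))} ⊆ B := by
            intro j hj v hv
            rw [hB]
            apply Finset.mem_union_right
            rw [Finset.mem_biUnion]
            exact ⟨j, Finset.mem_univ _, by rw [if_pos hj]; exact hv⟩
          refine ⟨?_, ?_, ?_, ?_⟩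
          · intro i hi
            by_cases h : i = m'
            · subst h
              rw [Function.update_self]
              exact ⟨heH, hae, hbe⟩
            · have hi' : i.val < m := by
                have : i.val ≠ m := fun hv => h (Fin.ext hv)
                omega
              rw [Function.update_of_ne h]
              exact f1 i hi'
          · intro i j hi hj hij
            by_cases h : i = m'
            · subst h
              rw [Function.update_self, Function.update_of_ne hij.symm]
              have hj' : j.val < m := by
                have : j.val ≠ m := fun hv => hij.symm (Fin.ext hv)
                omega
              exact Finset.disjoint_of_subset_right (hLsub j hj') hdisj
            · by_cases h2 : j = m'
              · subst h2
                rw [Function.update_self, Function.update_of_ne h]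
                have hi' : i.val < m := by
                  have : i.val ≠ m := fun hv => h (Fin.ext hv)
                  omega
                exact (Finset.disjoint_of_subset_right (hLsub i hi') hdisj).symm
              · rw [Function.update_of_ne h, Function.update_of_ne h2]
                have hi' : i.val < m := by
                  have : i.val ≠ m := fun hv => h (Fin.ext hv)
                  omega
                have hj' : j.val < m := by
                  have : j.val ≠ m := fun hv => h2 (Fin.ext hv)
                  omega
                exact f2 i j hi' hj' hij
          · intro i hi
            by_cases h : i = m'
            · subst h
              rw [Function.update_self]
              exact Finset.disjoint_of_subset_right hxsub hdisj
            · have hi' : i.val < m := by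
                have : i.val ≠ m := fun hv => h (Fin.ext hv)
                omega
              rw [Function.update_of_ne h]
              exact f3 i hi'
          · intro i hi
            have h : i ≠ m' := by
              intro hh; rw [hh] at hi; exact hi (Nat.lt_succ_self m)
            rw [Function.update_of_ne h]
            exact f4 i (by
              have : i.val ≠ m := fun hv => h (Fin.ext hv)
              omega)
        · rw [Function.update_idem]
          exact Function.update_eq_self_iff.mpr hfm.symm
      have hinjG : (G.card : ℝ) ≤
          (((S (m+1)).filter fun g => Function.update g m' ∅ = f).card : ℝ) := by
        have := Finset.card_le_card_of_injOn (fun e => Function.update f m' e) hmap ?_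
        · exact_mod_cast this
        · intro e _ e' _ hee
          have := congrFun hee m'
          simpa [Function.update_self] using this
      calc D / 2 ≤ (G.card : ℝ) := hGcard
      _ ≤ _ := hinjG
  -- chain
  have chain : ∀ m, m ≤ 2 * l → (D / 2) ^ m ≤ ((S m).card : ℝ) := by
    intro m
    induction m with
    | zero => intro _; rw [base]; norm_num
    | succ k ih =>
      intro hk
      have hk' : k < 2 * l := by omega
      calc (D/2)^(k+1) = D/2 * (D/2)^k := by ring
      _ ≤ D/2 * ((S k).card : ℝ) :=
          mul_le_mul_of_nonneg_left (ih (by omega)) (by linarith)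
      _ ≤ ((S (k+1)).card : ℝ) := step k hk'
  -- conclude
  have hset : {f : Fin (2 * l) → Finset (Fin n) | CycleExtension n l H' x f}
      = ↑(S (2 * l)) := by
    ext f
    simp only [Set.mem_setOf_eq, Finset.coe_filter, Finset.mem_coe]
    rw [memS]
    constructor
    · rintro ⟨c1, c2, c3⟩
      exact ⟨fun i _ => c1 i, fun i j _ _ hij => c2 i j hij, fun i _ => c3 i,
        fun i hi => absurd i.isLt hi⟩
    · rintro ⟨c1, c2, c3, -⟩
      exact ⟨fun i => c1 i i.isLt, fun i j hij => c2 i j i.isLt j.isLt hij,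
        fun i => c3 i i.isLt⟩
  rw [hset, Set.ncard_coe_finset]
  exact chain (2 * l) le_rfl

lemma part2 (n l r : ℕ) (hl : 2 ≤ l) (H' : Finset (Finset (Fin n)))
    (hcard : ∀ e ∈ H', e.card = r) (x : ℕ → Fin n)
    (hdist : ∀ i < 2 * l, ∀ j < 2 * l, x i = x j → i = j)
    (f : Fin (2 * l) → Finset (Fin n)) (hf : CycleExtension n l H' x f) :
    IsLinearCycle r (2 * l) (Finset.image f Finset.univ) := by
  obtain ⟨h1, h2, h3⟩ := hf
  have hN0 : 0 < 2 * l := by omega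
  classical
  set F : ℕ → Finset (Fin n) := fun i => if h : i < 2 * l then f ⟨i, h⟩ else ∅ with hF
  have key : ∀ i (hi : i < 2 * l), F i = f ⟨i, hi⟩ := fun i hi => dif_pos hi
  have claimB : ∀ i j : Fin (2 * l), i ≠ j → ∀ v, v ∈ f i → v ∈ f j →
      (v = x i.val ∨ v = x ((i.val + 1) % (2 * l))) ∧
      (v = x j.val ∨ v = x ((j.val + 1) % (2 * l))) := by
    intro i j hij v hvi hvj
    have himg : ∀ k : Fin (2 * l), x k.val ∈ (Finset.range (2 * l)).image x ∧
        x ((k.val + 1) % (2 * l)) ∈ (Finset.range (2 * l)).image x := by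
      intro k
      exact ⟨Finset.mem_image.mpr ⟨k.val, Finset.mem_range.mpr k.isLt, rfl⟩,
        Finset.mem_image.mpr ⟨(k.val+1) % (2*l), Finset.mem_range.mpr (succMod_lt hN0), rfl⟩⟩
    have aux : ∀ a b : Fin (2 * l), a ≠ b → ∀ w, w ∈ f a → w ∈ f b →
        w = x a.val ∨ w = x ((a.val + 1) % (2 * l)) := by
      intro a b hab w hwa hwb
      by_contra hcon
      push_neg at hcon
      have hwL : w ∈ f a \ {x a.val, x ((a.val + 1) % (2 * l))} := by
        simp [Finset.mem_sdiff, hwa, hcon.1, hcon.2]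
      have hwimg : w ∉ (Finset.range (2 * l)).image x :=
        Finset.disjoint_left.mp (h3 a) hwL
      have hwLb : w ∈ f b \ {x b.val, x ((b.val + 1) % (2 * l))} := by
        simp only [Finset.mem_sdiff, Finset.mem_insert, Finset.mem_singleton]
        refine ⟨hwb, ?_⟩
        rintro (rfl | rfl)
        · exact hwimg (himg b).1
        · exact hwimg (himg b).2
      exact absurd hwLb (Finset.disjoint_left.mp (h2 a b hab) hwL)
    exact ⟨aux i j hij v hvi hvj, aux j i (Ne.symm hij) v hvj hvi⟩
  refine ⟨F, ?_, ?_, ?_, ?_, ?_⟩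
  · -- injectivity
    intro i hi j hj he
    rw [key i hi, key j hj] at he
    by_contra hij
    have hij' : (⟨i, hi⟩ : Fin (2*l)) ≠ ⟨j, hj⟩ := by simp only [ne_eq, Fin.mk.injEq]; omega
    have hxi : x i ∈ f ⟨j, hj⟩ := he ▸ (h1 ⟨i, hi⟩).2.1
    have hxi1 : x ((i+1) % (2*l)) ∈ f ⟨j, hj⟩ := he ▸ (h1 ⟨i, hi⟩).2.2
    have c1 := (claimB ⟨i,hi⟩ ⟨j,hj⟩ hij' (x i) (h1 ⟨i,hi⟩).2.1 hxi).2
    have c2 := (claimB ⟨i,hi⟩ ⟨j,hj⟩ hij' (x ((i+1)%(2*l))) (h1 ⟨i,hi⟩).2.2 hxi1).2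
    simp only at c1 c2
    have d1 : i = j ∨ i = (j+1) % (2*l) := by
      rcases c1 with h | h
      · exact Or.inl (hdist i hi j hj h)
      · exact Or.inr (hdist i hi _ (succMod_lt hN0) h)
    have d2 : (i+1) % (2*l) = j ∨ (i+1) % (2*l) = (j+1) % (2*l) := by
      rcases c2 with h | h
      · exact Or.inl (hdist _ (succMod_lt hN0) j hj h)
      · exact Or.inr (hdist _ (succMod_lt hN0) _ (succMod_lt hN0) h)
    rcases d1 with rfl | d1
    · exact hij rfl
    · rcases d2 with d2 | d2
      · rw [← d2] at d1
        exact succSuccMod_ne (by omega) hi d1.symm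
      · exact hij (succMod_inj hi hj d2)
  · -- E = image
    ext s
    simp only [Finset.mem_image, Finset.mem_range, Finset.mem_univ, true_and]
    constructor
    · rintro ⟨i, rfl⟩
      exact ⟨i.val, i.isLt, (key i.val i.isLt).trans (by congr 1)⟩
    · rintro ⟨i, hi, rfl⟩
      exact ⟨⟨i, hi⟩, (key i hi).symm⟩
  · -- card
    intro i hi
    rw [key i hi]
    exact hcard _ (h1 ⟨i, hi⟩).1
  · -- consecutive
    intro i hi
    have hi1 : (i+1) % (2*l) < 2*l := succMod_lt hN0
    rw [key i hi, key _ hi1]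
    have hne : (⟨i, hi⟩ : Fin (2*l)) ≠ ⟨(i+1)%(2*l), hi1⟩ := by
      simp only [ne_eq, Fin.mk.injEq]
      exact fun h => succMod_ne (by omega) hi h.symm
    have heq : f ⟨i, hi⟩ ∩ f ⟨(i+1)%(2*l), hi1⟩ = {x ((i+1)%(2*l))} := by
      apply Finset.Subset.antisymm
      · intro v hv
        rw [Finset.mem_inter] at hv
        have c := claimB ⟨i,hi⟩ ⟨(i+1)%(2*l), hi1⟩ hne v hv.1 hv.2
        simp only at c
        rw [Finset.mem_singleton]
        rcases c.1 with rfl | rfl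
        · rcases c.2 with h | h
          · exact h
          · exact absurd (hdist i hi _ (succMod_lt hN0) h).symm
              (succSuccMod_ne (by omega) hi)
        · rfl
      · intro v hv
        rw [Finset.mem_singleton] at hv
        subst hv
        exact Finset.mem_inter.mpr ⟨(h1 ⟨i, hi⟩).2.2, (h1 ⟨(i+1)%(2*l), hi1⟩).2.1⟩
    rw [heq, Finset.card_singleton]
  · -- non-consecutive
    intro i hi j hj hij hij1 hji1
    rw [key i hi, key j hj]
    have hne : (⟨i, hi⟩ : Fin (2*l)) ≠ ⟨j, hj⟩ := by simp only [ne_eq, Fin.mk.injEq]; omega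
    rw [Finset.disjoint_left]
    intro v hvi hvj
    have c := claimB ⟨i,hi⟩ ⟨j,hj⟩ hne v hvi hvj
    simp only at c
    rcases c.1 with rfl | rfl <;> rcases c.2 with h | h
    · exact hij (hdist i hi j hj h)
    · exact hji1 (hdist i hi _ (succMod_lt hN0) h).symm
    · exact hij1 (hdist _ (succMod_lt hN0) j hj h)
    · exact hij (succMod_inj hi hj (hdist _ (succMod_lt hN0) _ (succMod_lt hN0) h))


theorem statement16 (r l : ℕ) (hr : 3 ≤ r) (hl : 2 ≤ l) (n : ℕ)
    (H' : Finset (Finset (Fin n))) (U : ℕ → Finset (Fin n))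
    (hpart : IsPartiteWith r U H')
    (D : ℝ) (hD : 8 * (l : ℝ) * (r : ℝ) * (n : ℝ) ^ (r - 3) ≤ D)
    (hcodeg : ∀ xy ∈ shadowPairs H' (U 0) (U 1), D ≤ (codeg H' xy.1 xy.2 : ℝ))
    (x : ℕ → Fin n)
    (hdist : ∀ i < 2 * l, ∀ j < 2 * l, x i = x j → i = j)
    (hshadow : ∀ i < 2 * l,
      (i % 2 = 0 → (x i, x ((i + 1) % (2 * l))) ∈ shadowPairs H' (U 0) (U 1)) ∧
      (i % 2 = 1 → (x ((i + 1) % (2 * l)), x i) ∈ shadowPairs H' (U 0) (U 1))) :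
    (D / 2) ^ (2 * l) ≤
      (Set.ncard {f : Fin (2 * l) → Finset (Fin n) | CycleExtension n l H' x f} : ℝ) ∧
    ∀ f : Fin (2 * l) → Finset (Fin n), CycleExtension n l H' x f →
      IsLinearCycle r (2 * l) (Finset.image f Finset.univ) := by
  constructor
  · exact part1 r l hr hl n H' U hpart D hD hcodeg x hdist hshadow
  · intro f hf
    exact part2 n l r hl H' (fun e he => (hpart.2 e he).1) x hdist f hf
end
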